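/- arXiv:2010.13675 — 13 statements merged into one kernel-verified Lean document; each statement's English description precedes it below -/
import Mathlib

section
/- Let C be a category equipped with a factorization system (E, M), an initial object I and a terminal object F. Let I --e--> M₀ --m--> F be an (E,M)-factorization of the unique morphism I → F (so e ∈ E and m ∈ M). Then M₀ is (E,M)-minimal: for every object X of C there exist an object Z and morphisms Z → M₀ in E and Z → X in M. -/
open CategoryTheory

/-- A factorization system `(E, M)` on a category `C`. -/
structure FactSys {C : Type*} [Category C] (E M : MorphismProperty C) : Prop where
  E_iso : ∀ {X Y : C} (f : X ⟶ Y), IsIso f → E f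
  M_iso : ∀ {X Y : C} (f : X ⟶ Y), IsIso f → M f
  E_comp : ∀ {X Y Z : C} (f : X ⟶ Y) (g : Y ⟶ Z), E f → E g → E (f ≫ g)
  M_comp : ∀ {X Y Z : C} (f : X ⟶ Y) (g : Y ⟶ Z), M f → M g → M (f ≫ g)
  fact : ∀ {X Y : C} (f : X ⟶ Y), ∃ (Z : C) (e : X ⟶ Z) (m : Z ⟶ Y), E e ∧ M m ∧ e ≫ m = f
  diag : ∀ {X Y Z W : C} (e : X ⟶ Y) (m : Z ⟶ W) (u : X ⟶ Z) (v : Y ⟶ W),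
    E e → M m → e ≫ v = u ≫ m → ∃! d : Y ⟶ Z, e ≫ d = u ∧ d ≫ m = v

/-- the middle object of an `(E,M)`-factorization of the unique morphism
from an initial object to a terminal object is `(E,M)`-minimal. -/
theorem stmt0 {C : Type*} [Category C] (E M : MorphismProperty C) (fs : FactSys E M)
    (I F M₀ : C) (hI : Limits.IsInitial I) (hF : Limits.IsTerminal F)
    (e : I ⟶ M₀) (m : M₀ ⟶ F) (he : E e) (hm : M m) :
    ∀ X : C, ∃ (Z : C) (p : Z ⟶ M₀) (i : Z ⟶ X), E p ∧ M i := by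
  intro X
  obtain ⟨Z, e', m', he', hm', hfac⟩ := fs.fact (hI.to X)
  -- lift: square e' ≫ (Z → F) = e ≫ m
  obtain ⟨d, ⟨hd1, hd2⟩, -⟩ := fs.diag e' m e (hF.from Z) he' hm
    (hF.hom_ext _ _)
  -- factor d
  obtain ⟨W, e₂, m₂, he₂, hm₂, hfac₂⟩ := fs.fact d
  -- show m₂ is iso
  have hee : E (e' ≫ e₂) := fs.E_comp _ _ he' he₂
  have hsq : (e' ≫ e₂) ≫ m₂ = e := by rw [Category.assoc, hfac₂, hd1]
  -- s : M₀ → W retraction of m₂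
  obtain ⟨s, ⟨hs1, hs2⟩, -⟩ := fs.diag e m₂ (e' ≫ e₂) (𝟙 M₀) he hm₂ (by simp [hsq])
  -- uniqueness of diagonal gives m₂ ≫ s = 𝟙 W
  obtain ⟨t, -, htu⟩ := fs.diag (e' ≫ e₂) m₂ (e' ≫ e₂) m₂ hee hm₂ rfl
  have hms : m₂ ≫ s = 𝟙 W := by
    have h1 := htu (m₂ ≫ s) ⟨by rw [← Category.assoc, hsq, hs1], by
      rw [Category.assoc, hs2, Category.comp_id]⟩
    have h2 := htu (𝟙 W) ⟨by simp, by simp⟩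
    rw [h1, ← h2]
  have : IsIso m₂ := ⟨s, hms, hs2⟩
  have hEd : E d := by
    rw [← hfac₂]; exact fs.E_comp _ _ he₂ (fs.E_iso _ this)
  exact ⟨Z, d, m', hEd, hm'⟩
end

section
/- Let C be a category equipped with a factorization system (E, M), an initial object I and a terminal object F, and let M₀ be the middle object of an (E,M)-factorization of the unique morphism I → F. If K is an (E,M)-noetherian object of C that (E,M)-divides M₀, then K is isomorphic to M₀. -/
open CategoryTheory

/-- An object `X` is `(E,M)`-noetherian: no infinite cochain of non-invertible
`E`-quotients and no infinite chain of non-invertible `M`-subobjects. -/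
def Noetherian {C : Type*} [Category C] (E M : MorphismProperty C) (X : C) : Prop :=
  (¬ ∃ (Y : ℕ → C) (f : ∀ n, X ⟶ Y n) (e : ∀ n, Y (n + 1) ⟶ Y n),
    (∀ n, E (f n)) ∧ (∀ n, E (e n)) ∧
    (∀ n, f (n + 1) ≫ e n = f n) ∧ (∀ n, ¬ IsIso (e n))) ∧
  (¬ ∃ (Z : ℕ → C) (g : ∀ n, Z n ⟶ X) (m : ∀ n, Z n ⟶ Z (n + 1)),
    (∀ n, M (g n)) ∧ (∀ n, M (m n)) ∧
    (∀ n, m n ≫ g (n + 1) = g n) ∧ (∀ n, ¬ IsIso (m n)))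

/-- an `(E,M)`-noetherian object that `(E,M)`-divides the middle object `M₀`
of an `(E,M)`-factorization of the unique morphism from an initial object to a terminal
object is isomorphic to `M₀`. -/
theorem stmt1 {C : Type*} [Category C] (E M : MorphismProperty C) (fs : FactSys E M)
    (I F M₀ : C) (hI : Limits.IsInitial I) (hF : Limits.IsTerminal F)
    (e : I ⟶ M₀) (m : M₀ ⟶ F) (he : E e) (hm : M m)
    (K : C) (hK : Noetherian E M K)
    (hdiv : ∃ (Z : C) (p : Z ⟶ K) (i : Z ⟶ M₀), E p ∧ M i) :
    Nonempty (K ≅ M₀) := by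
  obtain ⟨Z, p, i, hp, hi⟩ := hdiv
  -- d : M₀ ⟶ Z with d ≫ i = 𝟙
  obtain ⟨d, ⟨hed, hdi⟩, -⟩ := fs.diag e i (hI.to Z) (𝟙 M₀) he hi (by
    apply hI.hom_ext)
  -- d ∈ M
  obtain ⟨Z', δ, μ, hδ, hμ, hδμ⟩ := fs.fact d
  have hδμi : δ ≫ (μ ≫ i) = 𝟙 M₀ := by
    rw [← Category.assoc, hδμ, hdi]
  have hδiso : IsIso δ := by
    obtain ⟨g, -, hguniq⟩ := fs.diag δ (μ ≫ i) δ (μ ≫ i) hδ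
      (fs.M_comp μ i hμ hi) rfl
    have h1 : (𝟙 Z' : Z' ⟶ Z') = g := hguniq _ ⟨Category.comp_id _, Category.id_comp _⟩
    have h2 : (μ ≫ i) ≫ δ = g := hguniq _ ⟨by rw [← Category.assoc, hδμi, Category.id_comp], by
      rw [Category.assoc, hδμi, Category.comp_id]⟩
    exact ⟨μ ≫ i, hδμi, by rw [h2, ← h1]⟩
  have hdM : M d := by
    rw [← hδμ]
    exact fs.M_comp δ μ (fs.M_iso δ hδiso) hμ
  -- q : K ⟶ M₀ with p ≫ q = i
  obtain ⟨q, ⟨hpq, hqm⟩, -⟩ := fs.diag p m i (hF.from K) hp hm (by apply hF.hom_ext)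
  -- factor q and produce q̃ : K ⟶ Z in E with p ≫ q̃ = 𝟙
  obtain ⟨W, α, β, hα, hβ, hαβ⟩ := fs.fact q
  have hpαβ : (p ≫ α) ≫ β = 𝟙 Z ≫ i := by
    rw [Category.assoc, hαβ, hpq, Category.id_comp]
  obtain ⟨j, ⟨hj1, hj2⟩, -⟩ := fs.diag (p ≫ α) i (𝟙 Z) β (fs.E_comp p α hp hα) hi hpαβ
  have hjh : j ≫ (p ≫ α) = 𝟙 W := by
    obtain ⟨g, -, hguniq⟩ := fs.diag (p ≫ α) β (p ≫ α) β (fs.E_comp p α hp hα) hβ rfl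
    have h1 : (𝟙 W : W ⟶ W) = g := hguniq _ ⟨Category.comp_id _, Category.id_comp _⟩
    have h2 : j ≫ (p ≫ α) = g := hguniq _ ⟨by rw [← Category.assoc, hj1, Category.id_comp],
      by rw [Category.assoc, hpαβ, Category.id_comp, hj2]⟩
    rw [h2, ← h1]
  have hjiso : IsIso j := ⟨p ≫ α, hjh, hj1⟩
  set qt : K ⟶ Z := α ≫ j with hqt
  have hqtE : E qt := fs.E_comp α j hα (fs.E_iso j hjiso)
  have hpqt : p ≫ qt = 𝟙 Z := by rw [hqt, ← Category.assoc, hj1]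
  -- the idempotent σ = qt ≫ p in E; noetherianness forces σ = 𝟙, so p is iso
  set σ : K ⟶ K := qt ≫ p with hσ
  have hσE : E σ := fs.E_comp qt p hqtE hp
  have hσσ : σ ≫ σ = σ := by
    rw [hσ, Category.assoc, ← Category.assoc p qt, hpqt, Category.id_comp]
  have hσiso : IsIso σ := by
    by_contra hns
    exact hK.1 ⟨fun _ => K, fun _ => σ, fun _ => σ, fun _ => hσE, fun _ => hσE,
      fun _ => hσσ, fun _ => hns⟩
  have hσid : σ = 𝟙 K := by
    have := hσiso
    rw [← cancel_epi σ, hσσ, Category.comp_id]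
  have hpiso : IsIso p := ⟨qt, hpqt, hσid ▸ rfl⟩
  -- now r = d ≫ p and ĩ = p⁻¹ ≫ i are in M with r ≫ ĩ = 𝟙
  set r : M₀ ⟶ K := d ≫ p with hr
  have hrM : M r := fs.M_comp d p hdM (fs.M_iso p hpiso)
  set it : K ⟶ M₀ := inv p ≫ i with hit
  have hitM : M it := fs.M_comp (inv p) i (fs.M_iso (inv p) inferInstance) hi
  have hrit : r ≫ it = 𝟙 M₀ := by
    rw [hr, hit, Category.assoc, ← Category.assoc p, IsIso.hom_inv_id, Category.id_comp, hdi]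
  set τ : K ⟶ K := it ≫ r with hτ
  have hτM : M τ := fs.M_comp it r hitM hrM
  have hττ : τ ≫ τ = τ := by
    rw [hτ, Category.assoc, ← Category.assoc r it, hrit, Category.id_comp]
  have hτiso : IsIso τ := by
    by_contra hns
    exact hK.2 ⟨fun _ => K, fun _ => τ, fun _ => τ, fun _ => hτM, fun _ => hτM,
      fun _ => hττ, fun _ => hns⟩
  have hτid : τ = 𝟙 K := by
    have := hτiso
    rw [← cancel_epi τ, hττ, Category.comp_id]
  have : IsIso it := ⟨r, hτid ▸ rfl, hrit⟩
  exact ⟨asIso it⟩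
end

section
/- Fix a type B. A type X is finite if and only if the following two conditions hold: (i) there is no sequence of types (Y_n)_{n∈ℕ} together with Kleisli morphisms f_n : X ⇸ Y_n in Epi_KlT and e_n : Y_{n+1} ⇸ Y_n in Epi_KlT such that e_n ∘ f_{n+1} = f_n (Kleisli composition) for all n and no e_n is a Kleisli isomorphism; and (ii) there is no sequence of types (Z_n)_{n∈ℕ} together with Kleisli morphisms g_n : Z_n ⇸ X in Mono_KlT and m_n : Z_n ⇸ Z_{n+1} in Mono_KlT such that g_{n+1} ∘ m_n = g_n for all n and no m_n is a Kleisli isomorphism. -/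
/-- A Kleisli morphism `X ⇸ Y` for the monad `T Z = List B × Z ⊕ Unit`. -/
def Kl (B X Y : Type) : Type := X → (List B × Y) ⊕ Unit

/-- Kleisli composition: `klComp f g` is "first `f`, then `g`" (i.e. `g ∘ f`). -/
def klComp {B X Y Z : Type} (f : Kl B X Y) (g : Kl B Y Z) : Kl B X Z := fun x =>
  match f x with
  | Sum.inl (u, y) =>
    match g y with
    | Sum.inl (v, z) => Sum.inl (u ++ v, z)
    | Sum.inr _ => Sum.inr ()
  | Sum.inr _ => Sum.inr ()

/-- `f ∈ Epi_KlT`: every `y` is hit by some defined value of `f`. -/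
def KlEpi {B X Y : Type} (f : Kl B X Y) : Prop :=
  ∀ y : Y, ∃ (x : X) (u : List B), f x = Sum.inl (u, y)

/-- `f ∈ Mono_KlT`: `f` is everywhere defined, its second component is injective and
its first component is constantly the empty word. -/
def KlMono {B X Y : Type} (f : Kl B X Y) : Prop :=
  ∃ h : X → Y, Function.Injective h ∧ ∀ x, f x = Sum.inl ([], h x)

/-- `f` is a Kleisli isomorphism: everywhere defined, second component bijective,
first component constantly the empty word. -/
def KlIso {B X Y : Type} (f : Kl B X Y) : Prop :=
  ∃ h : X → Y, Function.Bijective h ∧ ∀ x, f x = Sum.inl ([], h x)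

/-- length of a Kleisli value -/
def klLen {B Y : Type} : (List B × Y) ⊕ Unit → ℕ
  | Sum.inl (u, _) => u.length
  | Sum.inr _ => 0

/-- a monotone bounded sequence of naturals stabilizes -/
lemma kl_stab : ∀ (K : ℕ) (a : ℕ → ℕ), (∀ n m, n ≤ m → a n ≤ a m) → (∀ n, a n ≤ K) →
    ∃ N, ∀ n, N ≤ n → a n = a N := by
  intro K
  induction K with
  | zero =>
    intro a _ bdd
    exact ⟨0, fun n _ => by have := bdd n; have := bdd 0; omega⟩
  | succ K ih =>
    intro a mono bdd
    by_cases h : ∀ n, a n ≤ K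
    · exact ih a mono h
    · push_neg at h
      obtain ⟨n0, hn0⟩ := h
      exact ⟨n0, fun n hn => by have := mono n0 n hn; have := bdd n; omega⟩

lemma kl_descent (w : ℕ → ℕ) (N : ℕ) (h : ∀ n, N ≤ n → w (n + 1) < w n) : False := by
  have key : ∀ k, w (N + k) + k ≤ w N := by
    intro k
    induction k with
    | zero => simp
    | succ k ihk =>
      have := h (N + k) (by omega)
      have : w (N + k + 1) < w (N + k) := this
      have e : N + (k + 1) = N + k + 1 := by omega
      rw [e]
      omega
  have := key (w N + 1)
  omega

/-- `X` is finite iff it is `(Epi_KlT, Mono_KlT)`-noetherian. -/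
theorem stmt3 (B : Type) (X : Type) :
    Finite X ↔
      (¬ ∃ (Y : ℕ → Type) (f : ∀ n, Kl B X (Y n)) (e : ∀ n, Kl B (Y (n + 1)) (Y n)),
        (∀ n, KlEpi (f n)) ∧ (∀ n, KlEpi (e n)) ∧
        (∀ n, klComp (f (n + 1)) (e n) = f n) ∧ (∀ n, ¬ KlIso (e n))) ∧
      (¬ ∃ (Z : ℕ → Type) (g : ∀ n, Kl B (Z n) X) (m : ∀ n, Kl B (Z n) (Z (n + 1))),
        (∀ n, KlMono (g n)) ∧ (∀ n, KlMono (m n)) ∧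
        (∀ n, klComp (m n) (g (n + 1)) = g n) ∧ (∀ n, ¬ KlIso (m n))) := by
  constructor
  · intro hfin
    constructor
    · -- epi chains
      rintro ⟨Y, f, e, hfE, heE, hc, hni⟩
      classical
      -- structural decomposition
      have step : ∀ (n : ℕ) (x : X) (u : List B) (y : Y n), f n x = Sum.inl (u, y) →
          ∃ (v : List B) (y' : Y (n+1)) (w : List B),
            f (n+1) x = Sum.inl (v, y') ∧ e n y' = Sum.inl (w, y) ∧ u = v ++ w := by
        intro n x u y hx
        have h := congrFun (hc n) x
        rw [hx] at h
        cases hf1 : f (n+1) x with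
        | inl p =>
          obtain ⟨v, y'⟩ := p
          cases he1 : e n y' with
          | inl q =>
            obtain ⟨w, z⟩ := q
            simp only [klComp, hf1, he1] at h
            obtain ⟨h1, h2⟩ := Prod.mk.injEq _ _ _ _ ▸ Sum.inl.inj h
            exact ⟨v, y', w, rfl, by rw [he1, h2], h1.symm⟩
          | inr _ =>
            simp only [klComp, hf1, he1] at h
            cases h
        | inr _ =>
          simp only [klComp, hf1] at h
          cases h
      have _instF : Fintype X := Fintype.ofFinite X
      -- sections for the epis f n : Y n embeds in X
      have hfE' := hfE
      choose s su hs using hfE'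
      have sinj : ∀ n, Function.Injective (s n) := by
        intro n a b hab
        have ha := hs n a
        rw [hab, hs n b] at ha
        exact (congrArg Prod.snd (Sum.inl.inj ha)).symm
      have finY : ∀ n, Finite (Y n) := fun n => Finite.of_injective (s n) (sinj n)
      -- sections for the epis e n : Y n embeds in Y (n+1)
      have heE' := heE
      choose t tu ht using heE'
      have tinj : ∀ n, Function.Injective (t n) := by
        intro n a b hab
        have ha := ht n a
        rw [hab, ht n b] at ha
        exact (congrArg Prod.snd (Sum.inl.inj ha)).symm
      -- domains
      set P : ∀ n : ℕ, X → Prop := fun n x => ∃ p, f n x = Sum.inl p with hP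
      set d : ℕ → ℕ := fun n => Nat.card {x : X // P n x} with hd
      set c : ℕ → ℕ := fun n => Nat.card (Y n) with hcard
      have dom_mono : ∀ n x, P n x → P (n+1) x := by
        rintro n x ⟨⟨u, y⟩, hx⟩
        obtain ⟨v, y', w', hf1, _, _⟩ := step n x u y hx
        exact ⟨(v, y'), hf1⟩
      have inclinj : ∀ n, Function.Injective
          (fun z : {x : X // P n x} => (⟨z.1, dom_mono n z.1 z.2⟩ : {x : X // P (n+1) x})) := by
        intro n a b hab
        simp only [Subtype.mk.injEq] at hab
        exact Subtype.ext hab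
      have dmono : ∀ n, d n ≤ d (n+1) := fun n =>
        Nat.card_le_card_of_injective _ (inclinj n)
      have cmono : ∀ n, c n ≤ c (n+1) := fun n => by
        have := finY (n+1)
        exact Nat.card_le_card_of_injective (t n) (tinj n)
      have dbd : ∀ n, d n ≤ Nat.card X := fun n =>
        Nat.card_le_card_of_injective Subtype.val Subtype.val_injective
      have cbd : ∀ n, c n ≤ Nat.card X := fun n => by
        have := finY n
        exact Nat.card_le_card_of_injective (s n) (sinj n)
      have dM : Monotone d := monotone_nat_of_le_succ dmono
      have cM : Monotone c := monotone_nat_of_le_succ cmono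
      obtain ⟨N, hN⟩ := kl_stab (Nat.card X + Nat.card X) (fun n => d n + c n)
        (fun n m hnm => add_le_add (dM hnm) (cM hnm))
        (fun n => by
          show d n + c n ≤ Nat.card X + Nat.card X
          exact add_le_add (dbd n) (cbd n))
      have hN' : ∀ n, N ≤ n → d n + c n = d N + c N := hN
      have hdN : ∀ n, N ≤ n → d n = d N := by
        intro n hn
        have h1 := hN' n hn
        have h2 := dM hn
        have h3 := cM hn
        omega
      have hcN : ∀ n, N ≤ n → c n = c N := by
        intro n hn
        have h1 := hN' n hn
        have h2 := dM hn
        have h3 := cM hn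
        omega
      -- for n ≥ N the domains coincide
      have dom_eq : ∀ n, N ≤ n → ∀ x, P (n+1) x → P n x := by
        intro n hn x hx
        have hcards : d n = d (n+1) := by
          rw [hdN n hn, hdN (n+1) (by omega)]
        have hbij := (Nat.bijective_iff_injective_and_card
          (fun z : {x : X // P n x} => (⟨z.1, dom_mono n z.1 z.2⟩ : {x : X // P (n+1) x}))).2
          ⟨inclinj n, hcards⟩
        obtain ⟨z, hz⟩ := hbij.2 ⟨x, hx⟩
        have : z.1 = x := congrArg Subtype.val hz
        rw [← this]
        exact z.2
      -- word lengths
      set w : ℕ → ℕ := fun n => ∑ x : X, klLen (f n x) with hw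
      have ptle : ∀ n, N ≤ n → ∀ x : X, klLen (f (n+1) x) ≤ klLen (f n x) := by
        intro n hn x
        cases hf1 : f (n+1) x with
        | inr _ => simp [klLen]
        | inl p =>
          obtain ⟨v, y'⟩ := p
          obtain ⟨⟨u, y⟩, hx⟩ := dom_eq n hn x ⟨_, hf1⟩
          obtain ⟨v', y'', w', hf1', he', hu⟩ := step n x u y hx
          rw [hf1] at hf1'
          have hv : v = v' := congrArg Prod.fst (Sum.inl.inj hf1')
          rw [hx]
          simp [klLen, hu, hv]
      have wlt : ∀ n, N ≤ n → w (n+1) < w n := by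
        intro n hn
        have hle := Finset.sum_le_sum (fun x (_ : x ∈ Finset.univ) => ptle n hn x)
        rcases lt_or_eq_of_le hle with h | h
        · exact h
        · exfalso
          have pteq : ∀ x : X, klLen (f (n+1) x) = klLen (f n x) := by
            have := (Finset.sum_eq_sum_iff_of_le
              (fun x (_ : x ∈ Finset.univ) => ptle n hn x)).1 h
            intro x
            exact this x (Finset.mem_univ x)
          have etot : ∀ y : Y (n+1), ∃ z : Y n, e n y = Sum.inl ([], z) := by
            intro y
            obtain ⟨x, u, hx1⟩ := hfE (n+1) y
            obtain ⟨⟨u0, y0⟩, hx0⟩ := dom_eq n hn x ⟨_, hx1⟩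
            obtain ⟨v, y', w', hf1', he', hu⟩ := step n x u0 y0 hx0
            rw [hx1] at hf1'
            have hv : u = v := congrArg Prod.fst (Sum.inl.inj hf1')
            have hy : y = y' := congrArg Prod.snd (Sum.inl.inj hf1')
            have hlen := pteq x
            rw [hx1, hx0] at hlen
            simp only [klLen] at hlen
            have hw' : w' = [] := by
              have h1 : u0.length = v.length + w'.length := by
                rw [hu]; simp
              have h2 : w'.length = 0 := by
                rw [hv] at hlen; omega
              exact List.eq_nil_of_length_eq_zero h2
            refine ⟨y0, ?_⟩
            rw [hy, he', hw']
          choose h2 hh using etot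
          have hsurj : Function.Surjective h2 := by
            intro z
            obtain ⟨y, w0, hy⟩ := heE n z
            refine ⟨y, ?_⟩
            rw [hh y] at hy
            exact congrArg Prod.snd (Sum.inl.inj hy)
          have hcc : Nat.card (Y (n+1)) = Nat.card (Y n) := by
            have h1 := hcN (n+1) (by omega)
            have h2 := hcN n hn
            simp only [hcard] at h1 h2
            omega
          have := finY (n+1)
          have hbij := (Nat.bijective_iff_surjective_and_card h2).2 ⟨hsurj, hcc⟩
          exact hni n ⟨h2, hbij, hh⟩
      exact kl_descent w N wlt
    · -- mono chains
      rintro ⟨Z, g, m, hgM, hmM, hc, hni⟩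
      classical
      choose gh ghinj ghval using hgM
      choose mh mhinj mhval using hmM
      have finZ : ∀ n, Finite (Z n) := fun n => Finite.of_injective (gh n) (ghinj n)
      have card_lt : ∀ n, Nat.card (Z n) < Nat.card (Z (n+1)) := by
        intro n
        have hle : Nat.card (Z n) ≤ Nat.card (Z (n+1)) := by
          have := finZ (n+1)
          exact Nat.card_le_card_of_injective (mh n) (mhinj n)
        rcases lt_or_eq_of_le hle with h | h
        · exact h
        · exfalso
          apply hni n
          have := finZ (n+1)
          exact ⟨mh n, (Nat.bijective_iff_injective_and_card (mh n)).2 ⟨mhinj n, h⟩, mhval n⟩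
      have grow : ∀ n, Nat.card (Z 0) + n ≤ Nat.card (Z n) := by
        intro n
        induction n with
        | zero => simp
        | succ n ihn => have := card_lt n; omega
      have bd : ∀ n, Nat.card (Z n) ≤ Nat.card X := fun n => by
        have := finZ n
        exact Nat.card_le_card_of_injective (gh n) (ghinj n)
      have := grow (Nat.card X + 1)
      have := bd (Nat.card X + 1)
      omega
  · rintro ⟨h1, h2⟩
    by_contra hinf
    rw [not_finite_iff_infinite] at hinf
    apply h2
    let ι := Infinite.natEmbedding X
    refine ⟨fun n => {x : X // ∀ k, n ≤ k → ι k ≠ x},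
      fun n z => Sum.inl ([], z.1),
      fun n z => Sum.inl ([], ⟨z.1, fun k hk => z.2 k (by omega)⟩), ?_, ?_, ?_, ?_⟩
    · exact fun n => ⟨Subtype.val, Subtype.val_injective, fun z => rfl⟩
    · refine fun n => ⟨fun z => ⟨z.1, fun k hk => z.2 k (by omega)⟩, ?_, fun z => rfl⟩
      intro a b hab
      simp only [Subtype.mk.injEq] at hab
      exact Subtype.ext hab
    · intro n
      funext z
      simp [klComp]
    · rintro n ⟨h, ⟨hinj, hsurj⟩, hval⟩
      obtain ⟨z, hz⟩ := hsurj ⟨ι n, fun k hk => fun hh => by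
        have := ι.injective hh; omega⟩
      have hz1 : (h z).1 = z.1 := by
        have := hval z
        have := Sum.inl.inj this
        have := (Prod.mk.injEq _ _ _ _ ▸ this).2
        exact (congrArg Subtype.val this).symm
      have : z.1 = ι n := by rw [← hz1, hz]
      exact z.2 n le_rfl this.symm
end

section
/- Suppose C has the coproduct ∐_{w ∈ List A} X of copies of X indexed by List A, with injections ι_w. Define Init(ℓ) = (∐_{List A} X, ι_ε, δ, o), where ε = [] is the empty word, δ_a is the unique morphism with δ_a ∘ ι_w = ι_{w ++ [a]} for all w, and o is the unique morphism with o ∘ ι_w = ℓ(w) for all w. Then Init(ℓ) is an automaton accepting ℓ, and for every automaton B accepting ℓ there exists a unique morphism of automata from Init(ℓ) to B. -/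
open CategoryTheory

/-- A word automaton in a category `C`, with input object `X` and output object `Y`. -/
structure Automaton (A : Type) {C : Type*} [Category C] (X Y : C) where
  S : C
  init : X ⟶ S
  δ : A → (S ⟶ S)
  out : S ⟶ Y

namespace Automaton

variable {A : Type} {C : Type*} [Category C] {X Y : C}

/-- The composite of the transitions along a word. -/
def runFrom (Au : Automaton A X Y) : List A → (Au.S ⟶ Au.S)
  | [] => 𝟙 Au.S
  | a :: w => Au.δ a ≫ Au.runFrom w

/-- The value of the automaton on a word: `o ∘ δ_{aₙ} ∘ ⋯ ∘ δ_{a₁} ∘ i`. -/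
def value (Au : Automaton A X Y) (w : List A) : X ⟶ Y :=
  Au.init ≫ Au.runFrom w ≫ Au.out

/-- The automaton accepts the language `ℓ`. -/
def Accepts (Au : Automaton A X Y) (ℓ : List A → (X ⟶ Y)) : Prop :=
  ∀ w : List A, Au.value w = ℓ w

end Automaton

/-- the automaton built on the copower `∐_{List A} X` is an automaton
accepting `ℓ`, and it is initial among automata accepting `ℓ`. -/
theorem stmt5 {A : Type} [Fintype A] {C : Type*} [Category C] {X Y : C}
    (ℓ : List A → (X ⟶ Y))
    (P : C) (ι : List A → (X ⟶ P))
    (hP : ∀ (Z : C) (f : List A → (X ⟶ Z)), ∃! g : P ⟶ Z, ∀ w, ι w ≫ g = f w)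
    (δ : A → (P ⟶ P)) (hδ : ∀ (a : A) (w : List A), ι w ≫ δ a = ι (w ++ [a]))
    (o : P ⟶ Y) (ho : ∀ w, ι w ≫ o = ℓ w) :
    (Automaton.mk P (ι []) δ o).Accepts ℓ ∧
    ∀ B : Automaton A X Y, B.Accepts ℓ →
      ∃! φ : P ⟶ B.S,
        ι [] ≫ φ = B.init ∧ (∀ a, δ a ≫ φ = φ ≫ B.δ a) ∧ φ ≫ B.out = o := by
  -- runFrom over snoc
  have runSnoc : ∀ (B : Automaton A X Y) (w : List A) (a : A),
      B.runFrom (w ++ [a]) = B.runFrom w ≫ B.δ a := by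
    intro B w a
    induction w with
    | nil => simp [Automaton.runFrom]
    | cons b w ih => simp [Automaton.runFrom, ih]
  -- ι composed with runFrom of the P-automaton
  have key : ∀ w : List A, ι [] ≫ (Automaton.mk P (ι []) δ o).runFrom w = ι w := by
    intro w
    induction w using List.reverseRecOn with
    | nil => simp [Automaton.runFrom]
    | append_singleton w a ih =>
        rw [runSnoc, ← Category.assoc, ih, hδ]
  -- morphisms out of P agreeing on ι are equal
  have ext : ∀ {Z : C} (g₁ g₂ : P ⟶ Z), (∀ w, ι w ≫ g₁ = ι w ≫ g₂) → g₁ = g₂ := by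
    intro Z g₁ g₂ h
    obtain ⟨g, hg, hu⟩ := hP Z (fun w => ι w ≫ g₁)
    exact (hu g₁ fun w => rfl).trans (hu g₂ fun w => (h w).symm).symm
  constructor
  · intro w
    show ι [] ≫ _ ≫ o = ℓ w
    rw [← Category.assoc, key, ho]
  · intro B hB
    obtain ⟨φ, hφ, hφu⟩ := hP B.S (fun w => B.init ≫ B.runFrom w)
    have hιφ : ∀ w, ι w ≫ φ = B.init ≫ B.runFrom w := hφ
    refine ⟨φ, ⟨?_, ?_, ?_⟩, ?_⟩
    · rw [hιφ]; simp [Automaton.runFrom]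
    · intro a
      apply ext
      intro w
      rw [← Category.assoc, hδ, hιφ, ← Category.assoc, hιφ,
        Category.assoc, ← runSnoc]
    · apply ext
      intro w
      rw [← Category.assoc, hιφ, ho, Category.assoc]
      exact hB w
    · rintro ψ ⟨h1, h2, h3⟩
      apply hφu
      intro w
      induction w using List.reverseRecOn with
      | nil => simpa [Automaton.runFrom] using h1
      | append_singleton w a ih =>
          rw [← hδ, Category.assoc, h2, ← Category.assoc, ih,
            Category.assoc, ← runSnoc]
end

section
/- Suppose C has the product ∏_{w ∈ List A} Y of copies of Y indexed by List A, with projections π_w. Define Final(ℓ) = (∏_{List A} Y, i, δ, π_ε), where ε = [] is the empty word, i is the unique morphism with π_w ∘ i = ℓ(w) for all w, and δ_a is the unique morphism with π_w ∘ δ_a = π_{[a] ++ w} for all w. Then Final(ℓ) is an automaton accepting ℓ, and for every automaton B accepting ℓ there exists a unique morphism of automata from B to Final(ℓ). -/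
open CategoryTheory

/-- the automaton built on the power `∏_{List A} Y` is an automaton
accepting `ℓ`, and it is final among automata accepting `ℓ`. -/
theorem stmt6 {A : Type} [Fintype A] {C : Type*} [Category C] {X Y : C}
    (ℓ : List A → (X ⟶ Y))
    (R : C) (π : List A → (R ⟶ Y))
    (hR : ∀ (Z : C) (f : List A → (Z ⟶ Y)), ∃! g : Z ⟶ R, ∀ w, g ≫ π w = f w)
    (i : X ⟶ R) (hi : ∀ w, i ≫ π w = ℓ w)
    (δ : A → (R ⟶ R)) (hδ : ∀ (a : A) (w : List A), δ a ≫ π w = π ([a] ++ w)) :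
    (Automaton.mk R i δ (π [])).Accepts ℓ ∧
    ∀ B : Automaton A X Y, B.Accepts ℓ →
      ∃! φ : B.S ⟶ R,
        B.init ≫ φ = i ∧ (∀ a, B.δ a ≫ φ = φ ≫ δ a) ∧ φ ≫ π [] = B.out := by
  have hrun : ∀ (w v : List A),
      (Automaton.mk R i δ (π [])).runFrom w ≫ π v = π (w ++ v) := by
    intro w
    induction w with
    | nil => intro v; simp [Automaton.runFrom]
    | cons a t ih =>
        intro v
        simp only [Automaton.runFrom, Category.assoc, ih, hδ]
        rfl
  constructor
  · intro w
    simp only [Automaton.value]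
    rw [hrun w [], List.append_nil, hi]
  · intro B hB
    obtain ⟨φ, hφ, huniq⟩ := hR B.S (fun w => B.runFrom w ≫ B.out)
    refine ⟨φ, ⟨?_, ?_, ?_⟩, ?_⟩
    · obtain ⟨g, _, hu⟩ := hR X ℓ
      rw [hu (B.init ≫ φ) (fun w => by rw [Category.assoc, hφ w]; exact hB w),
        hu i hi]
    · intro a
      obtain ⟨g, _, hu⟩ := hR B.S (fun w => B.δ a ≫ B.runFrom w ≫ B.out)
      rw [hu (B.δ a ≫ φ) (fun w => by rw [Category.assoc, hφ w]),
        hu (φ ≫ δ a) (fun w => by rw [Category.assoc, hδ, hφ]; simp [Automaton.runFrom])]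
    · simpa [Automaton.runFrom] using hφ []
    · intro ψ ⟨h1, h2, h3⟩
      refine huniq ψ (fun w => ?_)
      induction w with
      | nil => simpa [Automaton.runFrom] using h3
      | cons a t ih =>
          have : ψ ≫ π (a :: t) = ψ ≫ δ a ≫ π t := by rw [hδ]; rfl
          rw [this, ← Category.assoc, ← h2 a, Category.assoc, ih]
          simp [Automaton.runFrom]
end

section
/- Suppose C carries a factorization system (E, M) and has the coproduct ∐_{List A} X (injections ι_u) and the product ∏_{List A} Y (projections π_v). Let c : ∐_{List A} X → ∏_{List A} Y be the morphism determined by π_v ∘ c ∘ ι_u = ℓ(u ++ v) for all words u, v, and let c = m ∘ e be an (E,M)-factorization through an object N, with e ∈ E and m ∈ M. Then there is a unique automaton structure Min(ℓ) = (N, i, δ, o) such that e is a morphism of automata from the initial automaton Init(ℓ) to Min(ℓ) and m is a morphism of automata from Min(ℓ) to the final automaton Final(ℓ); this automaton accepts ℓ and is minimal: for every automaton B accepting ℓ there exist an automaton P accepting ℓ and morphisms of automata from P to Min(ℓ) whose underlying morphism of C lies in E, and from P to B whose underlying morphism of C lies in M. -/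
open CategoryTheory

namespace Automaton

variable {A : Type} {C : Type*} [Category C] {X Y : C}

/-- `φ` is the underlying morphism of a morphism of automata from `Au` to `Bu`. -/
def IsHomMor (Au Bu : Automaton A X Y) (φ : Au.S ⟶ Bu.S) : Prop :=
  Au.init ≫ φ = Bu.init ∧ (∀ a, Au.δ a ≫ φ = φ ≫ Bu.δ a) ∧ φ ≫ Bu.out = Au.out

end Automaton


namespace Automaton

variable {A : Type} {C : Type*} [Category C] {X Y : C}

theorem runFrom_append' (Au : Automaton A X Y) (u v : List A) :
    Au.runFrom (u ++ v) = Au.runFrom u ≫ Au.runFrom v := by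
  induction u with
  | nil => simp [runFrom]
  | cons a u ih => simp [runFrom, ih]

theorem runFrom_comm' {Au Bu : Automaton A X Y} {φ : Au.S ⟶ Bu.S}
    (h : Au.IsHomMor Bu φ) (w : List A) :
    Au.runFrom w ≫ φ = φ ≫ Bu.runFrom w := by
  induction w with
  | nil => simp [runFrom]
  | cons a w ih =>
    simp only [runFrom, Category.assoc, ih]
    rw [← Category.assoc, h.2.1 a, Category.assoc]

theorem value_eq' {Au Bu : Automaton A X Y} {φ : Au.S ⟶ Bu.S}
    (h : Au.IsHomMor Bu φ) (w : List A) :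
    Au.value w = Bu.value w := by
  unfold value
  rw [← h.1, ← h.2.2, Category.assoc]
  rw [← Category.assoc (Au.runFrom w), runFrom_comm' h w, Category.assoc]

end Automaton

theorem FactSys.E_cancel {C : Type*} [Category C] {E M : MorphismProperty C}
    (fs : FactSys E M) {X Y Z : C} {f : X ⟶ Y} {g : Y ⟶ Z}
    (hf : E f) (hfg : E (f ≫ g)) : E g := by
  obtain ⟨W, e₂, m₂, he₂, hm₂, hfac⟩ := fs.fact g
  obtain ⟨d, ⟨hd1, hd2⟩, _⟩ := fs.diag (f ≫ g) m₂ (f ≫ e₂) (𝟙 _) hfg hm₂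
    (by rw [Category.comp_id, ← hfac, Category.assoc])
  obtain ⟨d', _, hun⟩ := fs.diag (f ≫ e₂) m₂ (f ≫ e₂) m₂ (fs.E_comp _ _ hf he₂) hm₂ rfl
  have h1 : m₂ ≫ d = 𝟙 _ := by
    rw [hun (m₂ ≫ d) ⟨by rw [← Category.assoc, Category.assoc f e₂ m₂, hfac, hd1],
      by rw [Category.assoc, hd2, Category.comp_id]⟩,
      hun (𝟙 _) ⟨Category.comp_id _, Category.id_comp _⟩]
  have : IsIso m₂ := ⟨d, h1, hd2⟩
  rw [← hfac]
  exact fs.E_comp _ _ he₂ (fs.E_iso _ this)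

theorem FactSys.M_cancel {C : Type*} [Category C] {E M : MorphismProperty C}
    (fs : FactSys E M) {X Y Z : C} {f : X ⟶ Y} {g : Y ⟶ Z}
    (hg : M g) (hfg : M (f ≫ g)) : M f := by
  obtain ⟨W, e₂, m₂, he₂, hm₂, hfac⟩ := fs.fact f
  obtain ⟨d, ⟨hd1, hd2⟩, _⟩ := fs.diag e₂ (f ≫ g) (𝟙 _) (m₂ ≫ g) he₂ hfg
    (by rw [Category.id_comp, ← hfac, Category.assoc])
  obtain ⟨d', _, hun⟩ := fs.diag e₂ (m₂ ≫ g) e₂ (m₂ ≫ g) he₂ (fs.M_comp _ _ hm₂ hg) rfl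
  have h1 : d ≫ e₂ = 𝟙 _ := by
    rw [hun (d ≫ e₂) ⟨by rw [← Category.assoc, hd1, Category.id_comp],
      by rw [Category.assoc, ← Category.assoc e₂ m₂ g, hfac, hd2]⟩,
      hun (𝟙 _) ⟨Category.comp_id _, Category.id_comp _⟩]
  have : IsIso e₂ := ⟨d, hd1, h1⟩
  rw [← hfac]
  exact fs.M_comp _ _ (fs.M_iso _ this) hm₂

/-- an `(E,M)`-factorization of the canonical morphism
`∐_{List A} X ⟶ ∏_{List A} Y` carries a unique automaton structure making `e` and `m`
morphisms of automata from the initial automaton and to the final automaton respectively;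
this automaton accepts `ℓ` and is `(E,M)`-minimal among automata accepting `ℓ`. -/
theorem stmt7 {A : Type} [Fintype A] {C : Type*} [Category C]
    (E M : MorphismProperty C) (fs : FactSys E M) {X Y : C}
    (ℓ : List A → (X ⟶ Y))
    (P : C) (ι : List A → (X ⟶ P))
    (hP : ∀ (Z : C) (f : List A → (X ⟶ Z)), ∃! g : P ⟶ Z, ∀ w, ι w ≫ g = f w)
    (R : C) (π : List A → (R ⟶ Y))
    (hR : ∀ (Z : C) (f : List A → (Z ⟶ Y)), ∃! g : Z ⟶ R, ∀ w, g ≫ π w = f w)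
    (δI : A → (P ⟶ P)) (hδI : ∀ (a : A) (w : List A), ι w ≫ δI a = ι (w ++ [a]))
    (oI : P ⟶ Y) (hoI : ∀ w, ι w ≫ oI = ℓ w)
    (iF : X ⟶ R) (hiF : ∀ w, iF ≫ π w = ℓ w)
    (δF : A → (R ⟶ R)) (hδF : ∀ (a : A) (w : List A), δF a ≫ π w = π ([a] ++ w))
    (c : P ⟶ R) (hc : ∀ u v : List A, ι u ≫ c ≫ π v = ℓ (u ++ v))
    (N : C) (e : P ⟶ N) (m : N ⟶ R) (he : E e) (hm : M m) (hem : e ≫ m = c) :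
    (∃! t : (X ⟶ N) × (A → (N ⟶ N)) × (N ⟶ Y),
      (Automaton.mk P (ι []) δI oI).IsHomMor (Automaton.mk N t.1 t.2.1 t.2.2) e ∧
      (Automaton.mk N t.1 t.2.1 t.2.2).IsHomMor (Automaton.mk R iF δF (π [])) m) ∧
    (∀ (i : X ⟶ N) (δ : A → (N ⟶ N)) (o : N ⟶ Y),
      (Automaton.mk P (ι []) δI oI).IsHomMor (Automaton.mk N i δ o) e →
      (Automaton.mk N i δ o).IsHomMor (Automaton.mk R iF δF (π [])) m →
      (Automaton.mk N i δ o).Accepts ℓ ∧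
      ∀ B : Automaton A X Y, B.Accepts ℓ →
        ∃ Pa : Automaton A X Y, Pa.Accepts ℓ ∧
          ∃ (φ : Pa.S ⟶ N) (ψ : Pa.S ⟶ B.S),
            Pa.IsHomMor (Automaton.mk N i δ o) φ ∧ E φ ∧
            Pa.IsHomMor B ψ ∧ M ψ) := by
  classical
  -- extensionality from the universal properties
  have Pext : ∀ {Z : C} (f g : P ⟶ Z), (∀ w, ι w ≫ f = ι w ≫ g) → f = g := by
    intro Z f g h
    obtain ⟨u, -, hu⟩ := hP Z (fun w => ι w ≫ g)
    rw [hu f h, hu g fun w => rfl]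
  have Rext : ∀ {Z : C} (f g : Z ⟶ R), (∀ w, f ≫ π w = g ≫ π w) → f = g := by
    intro Z f g h
    obtain ⟨u, -, hu⟩ := hR Z (fun w => g ≫ π w)
    rw [hu f h, hu g fun w => rfl]
  have hδI' : ∀ (a : A) (w : List A) {Z : C} (h : P ⟶ Z),
      ι w ≫ δI a ≫ h = ι (w ++ [a]) ≫ h := by
    intro a w Z h; rw [← Category.assoc, hδI]
  have hcδ : ∀ a : A, c ≫ δF a = δI a ≫ c := by
    intro a
    refine Pext _ _ fun u => Rext _ _ fun v => ?_
    simp only [Category.assoc, hδF, hδI', hc, List.append_assoc, List.singleton_append,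
      List.cons_append, List.nil_append]
  have hcπ : c ≫ π [] = oI := by
    refine Pext _ _ fun u => ?_
    simp only [Category.assoc, hc, hoI, List.append_nil]
  have hιc : ι [] ≫ c = iF := by
    refine Rext _ _ fun v => ?_
    simp only [Category.assoc, hc, hiF, List.nil_append]
  -- the canonical transitions on N
  have hδ : ∀ a : A, ∃! d : N ⟶ N, e ≫ d = δI a ≫ e ∧ d ≫ m = m ≫ δF a := by
    intro a
    refine fs.diag e m (δI a ≫ e) (m ≫ δF a) he hm ?_
    rw [← Category.assoc, hem, hcδ, Category.assoc, hem]
  set δN : A → (N ⟶ N) := fun a => (hδ a).exists.choose with hδNdef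
  have hδNs : ∀ a, e ≫ δN a = δI a ≫ e ∧ δN a ≫ m = m ≫ δF a :=
    fun a => (hδ a).exists.choose_spec
  -- behaviour of the initial automaton
  have run_ι : ∀ (w u : List A),
      ι u ≫ (Automaton.mk P (ι []) δI oI).runFrom w = ι (u ++ w) := by
    intro w
    induction w with
    | nil => intro u; simp [Automaton.runFrom]
    | cons a w ih =>
      intro u
      show ι u ≫ δI a ≫ (Automaton.mk P (ι []) δI oI).runFrom w = _
      rw [hδI', ih]
      simp
  have hInitAcc : (Automaton.mk P (ι []) δI oI).Accepts ℓ := by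
    intro w
    show ι [] ≫ (Automaton.mk P (ι []) δI oI).runFrom w ≫ oI = ℓ w
    rw [← Category.assoc, run_ι, List.nil_append, hoI]
  constructor
  · -- STATEMENT: unique automaton structure
    refine ⟨(ι [] ≫ e, δN, m ≫ π []), ⟨⟨rfl, fun a => (hδNs a).1.symm, ?_⟩,
      ⟨?_, fun a => (hδNs a).2, rfl⟩⟩, ?_⟩
    · show e ≫ m ≫ π [] = oI
      rw [← Category.assoc, hem, hcπ]
    · show (ι [] ≫ e) ≫ m = iF
      rw [Category.assoc, hem, hιc]
    · rintro ⟨ti, tδ, tv⟩ ⟨h1, h2⟩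
      simp only [Prod.mk.injEq]
      exact ⟨h1.1.symm,
        funext fun a => (hδ a).unique ⟨(h1.2.1 a).symm, h2.2.1 a⟩ ⟨(hδNs a).1, (hδNs a).2⟩,
        h2.2.2.symm⟩
  · -- STATEMENT: acceptance and minimality
    intro i δ o hEh hMh
    have hE1 : ι [] ≫ e = i := hEh.1
    have hE2 : ∀ a, δI a ≫ e = e ≫ δ a := hEh.2.1
    have hM2 : ∀ a, δ a ≫ m = m ≫ δF a := hMh.2.1
    have hM3 : m ≫ π [] = o := hMh.2.2
    refine ⟨fun w => by rw [← Automaton.value_eq' hEh w]; exact hInitAcc w, ?_⟩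
    intro B hB
    obtain ⟨b, hb, -⟩ := hP B.S (fun w => B.init ≫ B.runFrom w)
    obtain ⟨r, hr, -⟩ := hR B.S (fun w => B.runFrom w ≫ B.out)
    have hb' : ∀ (w : List A) {Z : C} (h : B.S ⟶ Z),
        ι w ≫ b ≫ h = B.init ≫ B.runFrom w ≫ h := by
      intro w Z h; rw [← Category.assoc, hb, Category.assoc]
    have hbr : b ≫ r = c := by
      refine Pext _ _ fun u => Rext _ _ fun v => ?_
      simp only [Category.assoc, hb', hr, hc]
      rw [← hB (u ++ v)]
      show _ = B.init ≫ B.runFrom (u ++ v) ≫ B.out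
      rw [Automaton.runFrom_append', Category.assoc]
    have hbδ : ∀ a, δI a ≫ b = b ≫ B.δ a := by
      intro a
      refine Pext _ _ fun w => ?_
      show ι w ≫ δI a ≫ b = ι w ≫ b ≫ B.δ a
      rw [hδI', hb, hb' w (B.δ a), Automaton.runFrom_append']
      simp [Automaton.runFrom]
    have hbo : b ≫ B.out = oI := by
      refine Pext _ _ fun w => ?_
      show ι w ≫ b ≫ B.out = ι w ≫ oI
      rw [hb' w B.out, hoI]
      exact hB w
    obtain ⟨T, e', m', he', hm', hfac⟩ := fs.fact b
    have hδT : ∀ a : A, ∃! d : T ⟶ T, e' ≫ d = δI a ≫ e' ∧ d ≫ m' = m' ≫ B.δ a := by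
      intro a
      refine fs.diag e' m' (δI a ≫ e') (m' ≫ B.δ a) he' hm' ?_
      rw [← Category.assoc, hfac, ← hbδ, Category.assoc, hfac]
    set δT : A → (T ⟶ T) := fun a => (hδT a).exists.choose with hδTdef
    have hδTs : ∀ a, e' ≫ δT a = δI a ≫ e' ∧ δT a ≫ m' = m' ≫ B.δ a :=
      fun a => (hδT a).exists.choose_spec
    set Pa : Automaton A X Y := ⟨T, ι [] ≫ e', δT, m' ≫ B.out⟩ with hPadef
    have homE' : (Automaton.mk P (ι []) δI oI).IsHomMor Pa e' := by
      refine ⟨rfl, fun a => (hδTs a).1.symm, ?_⟩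
      show e' ≫ m' ≫ B.out = oI
      rw [← Category.assoc, hfac, hbo]
    have homM' : Pa.IsHomMor B m' := by
      refine ⟨?_, fun a => (hδTs a).2, rfl⟩
      show (ι [] ≫ e') ≫ m' = B.init
      rw [Category.assoc, hfac, hb]
      simp [Automaton.runFrom]
    have hPaAcc : Pa.Accepts ℓ := fun w => by
      rw [Automaton.value_eq' homM' w]; exact hB w
    have hrδ : ∀ a, B.δ a ≫ r = r ≫ δF a := by
      intro a
      refine Rext _ _ fun w => ?_
      rw [Category.assoc, hr, Category.assoc, hδF, hr]
      show B.δ a ≫ B.runFrom w ≫ B.out = B.runFrom ([a] ++ w) ≫ B.out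
      simp [Automaton.runFrom]
    have hsq : e' ≫ (m' ≫ r) = e ≫ m := by
      rw [← Category.assoc, hfac, hbr, hem]
    obtain ⟨φ, ⟨hφ1, hφ2⟩, -⟩ := fs.diag e' m e (m' ≫ r) he' hm hsq
    have hEφ : E φ := fs.E_cancel he' (by rw [hφ1]; exact he)
    have hδφ : ∀ a, δT a ≫ φ = φ ≫ δ a := by
      intro a
      have hsq2 : e' ≫ (m' ≫ r ≫ δF a) = (δI a ≫ e) ≫ m := by
        rw [← Category.assoc, ← Category.assoc, hfac, hbr, hcδ, ← hem, Category.assoc]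
      obtain ⟨d, -, hun⟩ := fs.diag e' m (δI a ≫ e) (m' ≫ r ≫ δF a) he' hm hsq2
      have c1 : e' ≫ δT a ≫ φ = δI a ≫ e := by
        rw [← Category.assoc, (hδTs a).1, Category.assoc, hφ1]
      have c2 : (δT a ≫ φ) ≫ m = m' ≫ r ≫ δF a := by
        rw [Category.assoc, hφ2, ← Category.assoc, (hδTs a).2, Category.assoc, hrδ]
      have c3 : e' ≫ φ ≫ δ a = δI a ≫ e := by
        rw [← Category.assoc, hφ1, ← hE2]
      have c4 : (φ ≫ δ a) ≫ m = m' ≫ r ≫ δF a := by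
        rw [Category.assoc, hM2, ← Category.assoc, hφ2, Category.assoc]
      exact (hun _ ⟨c1, c2⟩).trans (hun _ ⟨c3, c4⟩).symm
    have hφout : φ ≫ o = m' ≫ B.out := by
      rw [← hM3, ← Category.assoc, hφ2, Category.assoc, hr]
      show m' ≫ B.runFrom [] ≫ B.out = m' ≫ B.out
      simp [Automaton.runFrom]
    have hφinit : (ι [] ≫ e') ≫ φ = i := by
      rw [Category.assoc, hφ1, hE1]
    exact ⟨Pa, hPaAcc, φ, m', ⟨hφinit, hδφ, hφout⟩, hEφ, homM', hm'⟩
end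

section
/- Let (B1, B2, (i_q)_{q∈Q}, (δ_a)_{a∈A}, ē, (o_t)_{t∈T}) be a coherent (Q,T)-biautomaton. Then: (i) if q, q' ∈ Q, a, a' ∈ A and t, t' ∈ T satisfy q ++ [a] ++ t = q' ++ [a'] ++ t' as words, then o_t ∘ δ_a ∘ i_q = o_{t'} ∘ δ_{a'} ∘ i_{q'}; (ii) if q ++ t = q' ++ t' then o_t ∘ ē ∘ i_q = o_{t'} ∘ ē ∘ i_{q'}; (iii) if q ++ [a] ++ t = q' ++ t' then o_t ∘ δ_a ∘ i_q = o_{t'} ∘ ē ∘ i_{q'}. -/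
open CategoryTheory

/-- A `(Q,T)`-biautomaton in a category `C` with input object `X` and output object `Y`. -/
structure Biauto (A : Type) {C : Type*} [Category C] (X Y : C)
    (Q T : Set (List A)) where
  B1 : C
  B2 : C
  i : (q : List A) → q ∈ Q → (X ⟶ B1)
  δ : A → (B1 ⟶ B2)
  eb : B1 ⟶ B2
  o : (t : List A) → t ∈ T → (B2 ⟶ Y)

namespace Biauto

variable {A : Type} {C : Type*} [Category C] {X Y : C} {Q T : Set (List A)}

/-- The coherence conditions of a `(Q,T)`-biautomaton. -/
def Coherent (B : Biauto A X Y Q T) : Prop :=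
  (∀ (q : List A) (hq : q ∈ Q) (a : A) (h : q ++ [a] ∈ Q),
    B.i q hq ≫ B.δ a = B.i (q ++ [a]) h ≫ B.eb) ∧
  (∀ (t : List A) (ht : t ∈ T) (a : A) (h : [a] ++ t ∈ T),
    B.δ a ≫ B.o t ht = B.eb ≫ B.o ([a] ++ t) h)

/-- Consistency of a `(Q,T)`-biautomaton with the language `ℓ`. -/
def Consistent (B : Biauto A X Y Q T) (ℓ : List A → (X ⟶ Y)) : Prop :=
  (∀ (q : List A) (hq : q ∈ Q) (a : A) (t : List A) (ht : t ∈ T),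
    B.i q hq ≫ B.δ a ≫ B.o t ht = ℓ (q ++ [a] ++ t)) ∧
  (∀ (q : List A) (hq : q ∈ Q) (t : List A) (ht : t ∈ T),
    B.i q hq ≫ B.eb ≫ B.o t ht = ℓ (q ++ t))

/-- `(f1, f2)` is a morphism of `(Q,T)`-biautomata from `B` to `B'`. -/
def IsHom (B B' : Biauto A X Y Q T) (f1 : B.B1 ⟶ B'.B1) (f2 : B.B2 ⟶ B'.B2) : Prop :=
  (∀ (q : List A) (hq : q ∈ Q), B.i q hq ≫ f1 = B'.i q hq) ∧
  (∀ a : A, B.δ a ≫ f2 = f1 ≫ B'.δ a) ∧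
  (B.eb ≫ f2 = f1 ≫ B'.eb) ∧
  (∀ (t : List A) (ht : t ∈ T), f2 ≫ B'.o t ht = B.o t ht)

end Biauto

section Aux

variable {A : Type} {C : Type*} [Category C] {X Y : C} {Q T : Set (List A)}

/-- Sliding the marker `eb` across a block `m` of letters. -/
theorem slideE
    (hQpre : ∀ u v : List A, u ++ v ∈ Q → u ∈ Q)
    (hTsuf : ∀ u v : List A, u ++ v ∈ T → v ∈ T)
    (B : Biauto A X Y Q T) (hcoh : B.Coherent) :
    ∀ (m q r : List A), r = q ++ m → ∀ (hq : q ∈ Q) (hr : r ∈ Q)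
      (t s : List A), s = m ++ t → ∀ (ht : t ∈ T) (hs : s ∈ T),
      B.i q hq ≫ B.eb ≫ B.o s hs = B.i r hr ≫ B.eb ≫ B.o t ht := by
  intro m
  induction m with
  | nil =>
    intro q r hr hq hrQ t s hs ht hsT
    subst hr; subst hs; simp
  | cons a m' ih =>
    intro q r hrm hq hr t s hsm ht hs
    subst hrm; subst hsm
    have hmt : m' ++ t ∈ T := hTsuf [a] (m' ++ t) hs
    have hqa : q ++ [a] ∈ Q := by
      refine hQpre (q ++ [a]) m' ?_
      have h0 : (q ++ [a]) ++ m' = q ++ a :: m' := by simp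
      rwa [h0]
    have h1 : B.δ a ≫ B.o (m' ++ t) hmt = B.eb ≫ B.o ([a] ++ (m' ++ t)) hs :=
      hcoh.2 (m' ++ t) hmt a hs
    calc B.i q hq ≫ B.eb ≫ B.o ((a :: m') ++ t) hs
        = B.i q hq ≫ B.eb ≫ B.o ([a] ++ (m' ++ t)) hs := rfl
      _ = B.i q hq ≫ B.δ a ≫ B.o (m' ++ t) hmt := by rw [← h1]
      _ = (B.i q hq ≫ B.δ a) ≫ B.o (m' ++ t) hmt := by rw [Category.assoc]
      _ = (B.i (q ++ [a]) hqa ≫ B.eb) ≫ B.o (m' ++ t) hmt := by rw [hcoh.1 q hq a hqa]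
      _ = B.i (q ++ [a]) hqa ≫ B.eb ≫ B.o (m' ++ t) hmt := by rw [Category.assoc]
      _ = B.i (q ++ a :: m') hr ≫ B.eb ≫ B.o t ht :=
          ih (q ++ [a]) (q ++ a :: m') (by simp) hqa hr t (m' ++ t) rfl ht hmt

/-- Part (iii) as a standalone lemma. -/
theorem aux3
    (hQpre : ∀ u v : List A, u ++ v ∈ Q → u ∈ Q)
    (hTsuf : ∀ u v : List A, u ++ v ∈ T → v ∈ T)
    (B : Biauto A X Y Q T) (hcoh : B.Coherent) :
    ∀ (q : List A) (hq : q ∈ Q) (a : A) (q' : List A) (hq' : q' ∈ Q)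
        (t : List A) (ht : t ∈ T) (t' : List A) (ht' : t' ∈ T),
      q ++ [a] ++ t = q' ++ t' →
      B.i q hq ≫ B.δ a ≫ B.o t ht = B.i q' hq' ≫ B.eb ≫ B.o t' ht' := by
  intro q hq a q' hq' t ht t' ht' h
  by_cases hlen : q'.length ≤ q.length
  · have hp1 : q' <+: (q' ++ t') := ⟨t', rfl⟩
    have hp2 : q <+: (q' ++ t') := ⟨[a] ++ t, by rw [← h]; simp⟩
    obtain ⟨m, hm⟩ := List.prefix_of_prefix_length_le hp1 hp2 hlen
    have ht'eq : t' = m ++ ([a] ++ t) := by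
      apply List.append_cancel_left (as := q')
      rw [← h, ← hm]; simp
    have hat : [a] ++ t ∈ T := hTsuf m ([a] ++ t) (by rw [← ht'eq]; exact ht')
    have step : B.i q' hq' ≫ B.eb ≫ B.o t' ht' = B.i q hq ≫ B.eb ≫ B.o ([a] ++ t) hat :=
      slideE hQpre hTsuf B hcoh m q' q hm.symm hq' hq ([a] ++ t) t' ht'eq hat ht'
    rw [step, ← hcoh.2 t ht a hat]
  · push_neg at hlen
    have hp1 : (q ++ [a]) <+: (q' ++ t') := ⟨t, h⟩
    have hp2 : q' <+: (q' ++ t') := ⟨t', rfl⟩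
    obtain ⟨m, hm⟩ := List.prefix_of_prefix_length_le hp1 hp2 (by simp; omega)
    have hteq : t = m ++ t' := by
      apply List.append_cancel_left (as := q ++ [a])
      rw [h, ← hm]; simp
    have hqa : q ++ [a] ∈ Q := hQpre (q ++ [a]) m (by rw [hm]; exact hq')
    have step : B.i (q ++ [a]) hqa ≫ B.eb ≫ B.o t ht = B.i q' hq' ≫ B.eb ≫ B.o t' ht' :=
      slideE hQpre hTsuf B hcoh m (q ++ [a]) q' hm.symm hqa hq' t' t hteq ht' ht
    rw [← step, ← Category.assoc, hcoh.1 q hq a hqa, Category.assoc]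

end Aux

/-- in a coherent (Q,T)-biautomaton, the composite arrows only depend on the
underlying words. -/
theorem stmt8 {A : Type} [Fintype A] {C : Type*} [Category C] {X Y : C}
    (Q T : Set (List A))
    (hQpre : ∀ u v : List A, u ++ v ∈ Q → u ∈ Q)
    (hTsuf : ∀ u v : List A, u ++ v ∈ T → v ∈ T)
    (hεQ : [] ∈ Q) (hεT : [] ∈ T)
    (B : Biauto A X Y Q T) (hcoh : B.Coherent) :
    (∀ (q : List A) (hq : q ∈ Q) (q' : List A) (hq' : q' ∈ Q) (a a' : A)
        (t : List A) (ht : t ∈ T) (t' : List A) (ht' : t' ∈ T),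
      q ++ [a] ++ t = q' ++ [a'] ++ t' →
      B.i q hq ≫ B.δ a ≫ B.o t ht = B.i q' hq' ≫ B.δ a' ≫ B.o t' ht') ∧
    (∀ (q : List A) (hq : q ∈ Q) (q' : List A) (hq' : q' ∈ Q)
        (t : List A) (ht : t ∈ T) (t' : List A) (ht' : t' ∈ T),
      q ++ t = q' ++ t' →
      B.i q hq ≫ B.eb ≫ B.o t ht = B.i q' hq' ≫ B.eb ≫ B.o t' ht') ∧
    (∀ (q : List A) (hq : q ∈ Q) (a : A) (q' : List A) (hq' : q' ∈ Q)
        (t : List A) (ht : t ∈ T) (t' : List A) (ht' : t' ∈ T),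
      q ++ [a] ++ t = q' ++ t' →
      B.i q hq ≫ B.δ a ≫ B.o t ht = B.i q' hq' ≫ B.eb ≫ B.o t' ht') := by
  refine ⟨?_, ?_, ?_⟩
  · intro q hq q' hq' a a' t ht t' ht' h
    rcases lt_trichotomy q.length q'.length with hlen | hlen | hlen
    · have hp1 : (q ++ [a]) <+: (q' ++ [a'] ++ t') := ⟨t, h⟩
      have hp2 : q' <+: (q' ++ [a'] ++ t') := ⟨[a'] ++ t', by simp⟩
      obtain ⟨m, hm⟩ := List.prefix_of_prefix_length_le hp1 hp2 (by simp; omega)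
      have hqa : q ++ [a] ∈ Q := hQpre (q ++ [a]) m (by rw [hm]; exact hq')
      have h2 : q' ++ [a'] ++ t' = (q ++ [a]) ++ t := h.symm
      have := aux3 hQpre hTsuf B hcoh q' hq' a' (q ++ [a]) hqa t' ht' t ht h2
      rw [this, ← Category.assoc, hcoh.1 q hq a hqa, Category.assoc]
    · have hqq : q = q' := by
        have hp1 : q <+: (q' ++ [a'] ++ t') := ⟨[a] ++ t, by rw [← h]; simp⟩
        have hp2 : q' <+: (q' ++ [a'] ++ t') := ⟨[a'] ++ t', by simp⟩
        exact List.IsPrefix.eq_of_length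
          (List.prefix_of_prefix_length_le hp1 hp2 hlen.le) hlen
      subst hqq
      have h2 : [a] ++ t = [a'] ++ t' := by
        apply List.append_cancel_left (as := q); simpa [List.append_assoc] using h
      have haa : a = a' := by simpa using congrArg (fun l => l.head?) h2
      have htt : t = t' := by simpa [haa] using h2
      subst haa; subst htt; rfl
    · have hp1 : (q' ++ [a']) <+: (q ++ [a] ++ t) := ⟨t', by rw [h]⟩
      have hp2 : q <+: (q ++ [a] ++ t) := ⟨[a] ++ t, by simp⟩
      obtain ⟨m, hm⟩ := List.prefix_of_prefix_length_le hp1 hp2 (by simp; omega)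
      have hqa : q' ++ [a'] ∈ Q := hQpre (q' ++ [a']) m (by rw [hm]; exact hq)
      have h2 : q ++ [a] ++ t = (q' ++ [a']) ++ t' := h
      have := aux3 hQpre hTsuf B hcoh q hq a (q' ++ [a']) hqa t ht t' ht' h2
      rw [this, ← Category.assoc, ← hcoh.1 q' hq' a' hqa, Category.assoc]
  · intro q hq q' hq' t ht t' ht' h
    rcases List.append_eq_append_iff.mp h with ⟨m, hm1, hm2⟩ | ⟨m, hm1, hm2⟩
    · exact (slideE hQpre hTsuf B hcoh m q q' hm1 hq hq' t' t hm2 ht' ht)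
    · exact (slideE hQpre hTsuf B hcoh m q' q hm1 hq' hq t t' hm2 ht ht').symm
  · exact aux3 hQpre hTsuf B hcoh
end

section
/- Let QA = {q ++ [a] : q ∈ Q, a ∈ A} and suppose C has the coproducts ∐_Q X and ∐_{Q∪QA} X (with injections ι). Define Init_{Q,T}(ℓ) by: B1 = ∐_Q X, B2 = ∐_{Q∪QA} X, i_q = ι_q, ē the unique morphism with ē ∘ ι_q = ι_q (the injection of the larger coproduct) for all q ∈ Q, δ_a the unique morphism with δ_a ∘ ι_q = ι_{q ++ [a]} for all q ∈ Q, and o_t the unique morphism with o_t ∘ ι_w = ℓ(w ++ t) for all w ∈ Q ∪ QA. Then Init_{Q,T}(ℓ) is a coherent (Q,T)-biautomaton consistent with ℓ, and for every coherent (Q,T)-biautomaton B consistent with ℓ there exists a unique morphism of (Q,T)-biautomata from Init_{Q,T}(ℓ) to B. -/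
open CategoryTheory

/-- the biautomaton built on the copowers `∐_Q X` and `∐_{Q∪QA} X` is a
coherent (Q,T)-biautomaton consistent with `ℓ`, and it is initial among coherent
(Q,T)-biautomata consistent with `ℓ`. -/
theorem stmt9 {A : Type} [Fintype A] {C : Type*} [Category C] {X Y : C}
    (ℓ : List A → (X ⟶ Y)) (Q T : Set (List A))
    (hQpre : ∀ u v : List A, u ++ v ∈ Q → u ∈ Q)
    (hTsuf : ∀ u v : List A, u ++ v ∈ T → v ∈ T)
    (hεQ : [] ∈ Q) (hεT : [] ∈ T)
    (P1 : C) (ι1 : (q : List A) → q ∈ Q → (X ⟶ P1))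
    (hP1 : ∀ (Z : C) (f : (q : List A) → q ∈ Q → (X ⟶ Z)),
      ∃! g : P1 ⟶ Z, ∀ (q : List A) (hq : q ∈ Q), ι1 q hq ≫ g = f q hq)
    (P2 : C)
    (ι2 : (w : List A) → w ∈ Q ∪ {w | ∃ q ∈ Q, ∃ a : A, w = q ++ [a]} → (X ⟶ P2))
    (hP2 : ∀ (Z : C)
        (f : (w : List A) → w ∈ Q ∪ {w | ∃ q ∈ Q, ∃ a : A, w = q ++ [a]} → (X ⟶ Z)),
      ∃! g : P2 ⟶ Z, ∀ w hw, ι2 w hw ≫ g = f w hw)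
    (eb : P1 ⟶ P2)
    (heb : ∀ (q : List A) (hq : q ∈ Q),
      ι1 q hq ≫ eb = ι2 q (Set.mem_union_left _ hq))
    (δ : A → (P1 ⟶ P2))
    (hδ : ∀ (a : A) (q : List A) (hq : q ∈ Q),
      ι1 q hq ≫ δ a = ι2 (q ++ [a]) (Set.mem_union_right _ ⟨q, hq, a, rfl⟩))
    (o : (t : List A) → t ∈ T → (P2 ⟶ Y))
    (ho : ∀ (t : List A) (ht : t ∈ T) (w : List A) hw,
      ι2 w hw ≫ o t ht = ℓ (w ++ t)) :
    (Biauto.mk P1 P2 ι1 δ eb o).Coherent ∧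
    (Biauto.mk P1 P2 ι1 δ eb o).Consistent ℓ ∧
    ∀ B : Biauto A X Y Q T, B.Coherent → B.Consistent ℓ →
      ∃! p : (P1 ⟶ B.B1) × (P2 ⟶ B.B2),
        (Biauto.mk P1 P2 ι1 δ eb o).IsHom B p.1 p.2 := by

  classical
  constructor
  · constructor
    · intro q hq a h
      rw [hδ, heb]
    · intro t ht a h
      obtain ⟨g, hg, hu⟩ := hP1 Y (fun q hq => ℓ (q ++ [a] ++ t))
      have h1 : δ a ≫ o t ht = g := by
        apply hu; intro q hq
        rw [← Category.assoc, hδ, ho]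
      have h2 : eb ≫ o ([a] ++ t) h = g := by
        apply hu; intro q hq
        rw [← Category.assoc, heb, ho, List.append_assoc]
      exact h1.trans h2.symm
  constructor
  · constructor
    · intro q hq a t ht
      rw [← Category.assoc, hδ, ho]
    · intro q hq t ht
      rw [← Category.assoc, heb, ho]
  · intro B hcoh hcons
    obtain ⟨f1, hf1, hf1u⟩ := hP1 B.B1 (fun q hq => B.i q hq)
    -- well-defined generator map for f2
    have key : ∀ w (hw : w ∈ Q ∪ {w | ∃ q ∈ Q, ∃ a : A, w = q ++ [a]}),
        ∃ g : X ⟶ B.B2, (∀ h : w ∈ Q, g = B.i w h ≫ B.eb) ∧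
          (∀ q (hq : q ∈ Q) a, w = q ++ [a] → g = B.i q hq ≫ B.δ a) := by
      intro w hw
      by_cases h : w ∈ Q
      · refine ⟨B.i w h ≫ B.eb, fun _ => rfl, ?_⟩
        intro q hq a hwa
        subst hwa
        exact (hcoh.1 q hq a h).symm
      · obtain ⟨q, hq, a, hwa⟩ := hw.resolve_left h
        refine ⟨B.i q hq ≫ B.δ a, fun h' => absurd h' h, ?_⟩
        intro q' hq' a' hwa'
        rw [hwa] at hwa'
        obtain ⟨hq2, ha2⟩ := List.append_inj' hwa'.symm rfl
        cases List.singleton_injective ha2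
        cases hq2
        rfl
    choose F hF1 hF2 using key
    obtain ⟨f2, hf2, hf2u⟩ := hP2 B.B2 F
    have hom : (Biauto.mk P1 P2 ι1 δ eb o).IsHom B f1 f2 := by
      refine ⟨hf1, ?_, ?_, ?_⟩
      · intro a
        obtain ⟨g, hg, hu⟩ := hP1 B.B2 (fun q hq => B.i q hq ≫ B.δ a)
        have h1 : δ a ≫ f2 = g := by
          apply hu; intro q hq
          rw [← Category.assoc, hδ, hf2,
            hF2 _ _ q hq a rfl]
        have h2 : f1 ≫ B.δ a = g := by
          apply hu; intro q hq
          rw [← Category.assoc, hf1]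
        exact h1.trans h2.symm
      · obtain ⟨g, hg, hu⟩ := hP1 B.B2 (fun q hq => B.i q hq ≫ B.eb)
        have h1 : eb ≫ f2 = g := by
          apply hu; intro q hq
          rw [← Category.assoc, heb, hf2, hF1 _ _ hq]
        have h2 : f1 ≫ B.eb = g := by
          apply hu; intro q hq
          rw [← Category.assoc, hf1]
        exact h1.trans h2.symm
      · intro t ht
        obtain ⟨g, hg, hu⟩ := hP2 Y (fun w hw => ℓ (w ++ t))
        have h1 : f2 ≫ B.o t ht = g := by
          apply hu; intro w hw
          rw [← Category.assoc, hf2]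
          by_cases h : w ∈ Q
          · rw [hF1 _ _ h, Category.assoc, hcons.2 w h t ht]
          · obtain ⟨q, hq, a, hwa⟩ := hw.resolve_left h
            rw [hF2 _ _ q hq a hwa, Category.assoc, hcons.1 q hq a t ht, hwa]
        have h2 : o t ht = g := by
          apply hu; intro w hw; exact ho t ht w hw
        exact h1.trans h2.symm
    refine ⟨(f1, f2), hom, ?_⟩
    rintro ⟨g1, g2⟩ ⟨hi, hd, he, hot⟩
    have hg1 : g1 = f1 := by
      rw [hf1u g1 hi]
    have hg2 : g2 = f2 := by
      have : ∀ w hw, ι2 w hw ≫ g2 = F w hw := by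
        intro w hw
        by_cases h : w ∈ Q
        · rw [hF1 _ _ h, ← heb w h, Category.assoc, he, ← Category.assoc,
            hi w h]
        · obtain ⟨q, hq, a, hwa⟩ := hw.resolve_left h
          rw [hF2 _ _ q hq a hwa]
          subst hwa
          rw [← hδ a q hq, Category.assoc, hd, ← Category.assoc, hi q hq]
      rw [hf2u g2 this]
    simp [hg1, hg2]
end

section
/- Let AT = {[a] ++ t : a ∈ A, t ∈ T} and suppose C has the products ∏_{T∪AT} Y and ∏_T Y (with projections π). Define Final_{Q,T}(ℓ) by: B1 = ∏_{T∪AT} Y, B2 = ∏_T Y, i_q the unique morphism with π_w ∘ i_q = ℓ(q ++ w) for all w ∈ T ∪ AT, ē the unique morphism with π_t ∘ ē = π_t for all t ∈ T (the canonical restriction), δ_a the unique morphism with π_t ∘ δ_a = π_{[a] ++ t} for all t ∈ T, and o_t = π_t. Then Final_{Q,T}(ℓ) is a coherent (Q,T)-biautomaton consistent with ℓ, and for every coherent (Q,T)-biautomaton B consistent with ℓ there exists a unique morphism of (Q,T)-biautomata from B to Final_{Q,T}(ℓ). -/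
open CategoryTheory

/-- the biautomaton built on the powers `∏_{T∪AT} Y` and `∏_T Y` is a
coherent (Q,T)-biautomaton consistent with `ℓ`, and it is final among coherent
(Q,T)-biautomata consistent with `ℓ`. -/
theorem stmt10 {A : Type} [Fintype A] {C : Type*} [Category C] {X Y : C}
    (ℓ : List A → (X ⟶ Y)) (Q T : Set (List A))
    (hQpre : ∀ u v : List A, u ++ v ∈ Q → u ∈ Q)
    (hTsuf : ∀ u v : List A, u ++ v ∈ T → v ∈ T)
    (hεQ : [] ∈ Q) (hεT : [] ∈ T)
    (R1 : C)
    (π1 : (w : List A) → w ∈ T ∪ {w | ∃ a : A, ∃ t ∈ T, w = [a] ++ t} → (R1 ⟶ Y))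
    (hR1 : ∀ (Z : C)
        (f : (w : List A) → w ∈ T ∪ {w | ∃ a : A, ∃ t ∈ T, w = [a] ++ t} → (Z ⟶ Y)),
      ∃! g : Z ⟶ R1, ∀ w hw, g ≫ π1 w hw = f w hw)
    (R2 : C) (π2 : (t : List A) → t ∈ T → (R2 ⟶ Y))
    (hR2 : ∀ (Z : C) (f : (t : List A) → t ∈ T → (Z ⟶ Y)),
      ∃! g : Z ⟶ R2, ∀ (t : List A) (ht : t ∈ T), g ≫ π2 t ht = f t ht)
    (i : (q : List A) → q ∈ Q → (X ⟶ R1))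
    (hi : ∀ (q : List A) (hq : q ∈ Q) (w : List A) hw,
      i q hq ≫ π1 w hw = ℓ (q ++ w))
    (eb : R1 ⟶ R2)
    (heb : ∀ (t : List A) (ht : t ∈ T),
      eb ≫ π2 t ht = π1 t (Set.mem_union_left _ ht))
    (δ : A → (R1 ⟶ R2))
    (hδ : ∀ (a : A) (t : List A) (ht : t ∈ T),
      δ a ≫ π2 t ht = π1 ([a] ++ t) (Set.mem_union_right _ ⟨a, t, ht, rfl⟩)) :
    (Biauto.mk R1 R2 i δ eb π2).Coherent ∧
    (Biauto.mk R1 R2 i δ eb π2).Consistent ℓ ∧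
    ∀ B : Biauto A X Y Q T, B.Coherent → B.Consistent ℓ →
      ∃! p : (B.B1 ⟶ R1) × (B.B2 ⟶ R2),
        B.IsHom (Biauto.mk R1 R2 i δ eb π2) p.1 p.2 := by
  classical
  refine ⟨⟨?_, ?_⟩, ⟨?_, ?_⟩, ?_⟩
  · -- coherence 1
    intro q hq a h
    obtain ⟨g, hg, hgu⟩ := hR2 X (fun t ht => ℓ (q ++ [a] ++ t))
    have h1 : i q hq ≫ δ a = g := by
      refine hgu _ ?_
      intro t ht
      rw [Category.assoc, hδ, hi, ← List.append_assoc]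
    have h2 : i (q ++ [a]) h ≫ eb = g := by
      refine hgu _ ?_
      intro t ht
      rw [Category.assoc, heb, hi]
    simpa using h1.trans h2.symm
  · -- coherence 2
    intro t ht a h
    show δ a ≫ π2 t ht = eb ≫ π2 ([a] ++ t) h
    rw [hδ, heb]
  · -- consistency 1
    intro q hq a t ht
    show i q hq ≫ δ a ≫ π2 t ht = _
    rw [hδ, hi, ← List.append_assoc]
  · -- consistency 2
    intro q hq t ht
    show i q hq ≫ eb ≫ π2 t ht = _
    rw [heb, hi]
  · -- finality
    intro B hCoh hCon
    obtain ⟨f2, hf2, hf2u⟩ := hR2 B.B2 (fun t ht => B.o t ht)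
    set F : (w : List A) → w ∈ T ∪ {w | ∃ a : A, ∃ t ∈ T, w = [a] ++ t} → (B.B1 ⟶ Y) :=
      fun w hw =>
        if h : w ∈ T then B.eb ≫ B.o w h
        else
          B.δ (w.head (by
            obtain ⟨a, t, ht, rfl⟩ := hw.resolve_left h
            simp))
          ≫ B.o w.tail (by
            obtain ⟨a, t, ht, rfl⟩ := hw.resolve_left h
            simpa using ht) with hF
    have hFT : ∀ (t : List A) (ht : t ∈ T)
        (hw : t ∈ T ∪ {w | ∃ a : A, ∃ t ∈ T, w = [a] ++ t}),
        F t hw = B.eb ≫ B.o t ht := by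
      intro t ht hw
      exact dif_pos ht
    have hFAT : ∀ (a : A) (t : List A) (ht : t ∈ T)
        (hw : [a] ++ t ∈ T ∪ {w | ∃ a : A, ∃ t ∈ T, w = [a] ++ t}),
        F ([a] ++ t) hw = B.δ a ≫ B.o t ht := by
      intro a t ht hw
      by_cases h : [a] ++ t ∈ T
      · rw [hFT _ h hw, ← hCoh.2 t ht a h]
      · exact dif_neg h
    obtain ⟨f1, hf1, hf1u⟩ := hR1 B.B1 F
    refine ⟨⟨f1, f2⟩, ⟨?_, ?_, ?_, ?_⟩, ?_⟩
    · -- i condition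
      intro q hq
      obtain ⟨g, hg, hgu⟩ := hR1 X (fun w hw => ℓ (q ++ w))
      have h1 : B.i q hq ≫ f1 = g := by
        refine hgu _ ?_
        intro w hw
        rw [Category.assoc, hf1]
        rcases id hw with hT | hAT'
        · rw [hFT w hT hw, hCon.2 q hq w hT]
        · obtain ⟨a, t, ht, rfl⟩ := hAT'
          rw [hFAT a t ht hw, hCon.1 q hq a t ht, List.append_assoc]
      have h2 : i q hq = g := hgu _ (fun w hw => hi q hq w hw)
      exact h1.trans h2.symm
    · -- δ condition
      intro a
      obtain ⟨g, hg, hgu⟩ := hR2 B.B1 (fun t ht => B.δ a ≫ B.o t ht)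
      have h1 : B.δ a ≫ f2 = g := by
        refine hgu _ ?_
        intro t ht
        rw [Category.assoc, hf2]
      have h2 : f1 ≫ δ a = g := by
        refine hgu _ ?_
        intro t ht
        have hw : [a] ++ t ∈ T ∪ {w | ∃ a : A, ∃ t ∈ T, w = [a] ++ t} :=
          Set.mem_union_right _ ⟨a, t, ht, rfl⟩
        rw [Category.assoc, hδ, hf1 _ hw, hFAT a t ht hw]
      exact h1.trans h2.symm
    · -- eb condition
      obtain ⟨g, hg, hgu⟩ := hR2 B.B1 (fun t ht => B.eb ≫ B.o t ht)
      have h1 : B.eb ≫ f2 = g := by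
        refine hgu _ ?_
        intro t ht
        rw [Category.assoc, hf2]
      have h2 : f1 ≫ eb = g := by
        refine hgu _ ?_
        intro t ht
        have hw : t ∈ T ∪ {w | ∃ a : A, ∃ t ∈ T, w = [a] ++ t} :=
          Set.mem_union_left _ ht
        rw [Category.assoc, heb, hf1 _ hw, hFT t ht hw]
      exact h1.trans h2.symm
    · -- o condition
      intro t ht
      exact hf2 t ht
    · -- uniqueness
      rintro ⟨g1, g2⟩ ⟨hgi, hgδ, hgeb, hgo⟩
      have hg2 : g2 = f2 := hf2u g2 (fun t ht => hgo t ht)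
      have hg1 : g1 = f1 := by
        refine hf1u g1 ?_
        intro w hw
        rcases id hw with hT | hAT'
        · rw [hFT w hT hw, ← heb w hT, ← Category.assoc, ← hgeb,
            Category.assoc, hgo]
        · obtain ⟨a, t, ht, rfl⟩ := hAT'
          rw [hFAT a t ht hw, ← hδ a t ht, ← Category.assoc, ← hgδ,
            Category.assoc, hgo]
      simp [hg1, hg2]
end

section
/- Let QA = {q ++ [a] : q ∈ Q, a ∈ A} and AT = {[a] ++ t : a ∈ A, t ∈ T}; suppose C carries a factorization system (E, M) and has the coproducts ∐_Q X, ∐_{Q∪QA} X and the products ∏_{T∪AT} Y, ∏_T Y. Let c₁ : ∐_Q X → ∏_{T∪AT} Y and c₂ : ∐_{Q∪QA} X → ∏_T Y be the morphisms determined by π_w ∘ c₁ ∘ ι_q = ℓ(q ++ w) and π_t ∘ c₂ ∘ ι_w = ℓ(w ++ t), and fix (E,M)-factorizations c₁ = m₁ ∘ e₁ through N₁ and c₂ = m₂ ∘ e₂ through N₂. Then there exist unique morphisms δ^min_a : N₁ → N₂ (a ∈ A) and ē^min : N₁ → N₂ such that, setting i^min_q = e₁ ∘ ι_q and o^min_t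 = π_t ∘ m₂, the tuple (N₁, N₂, i^min, δ^min, ē^min, o^min) is a coherent (Q,T)-biautomaton consistent with ℓ, (e₁, e₂) is a morphism of (Q,T)-biautomata from the initial biautomaton Init_{Q,T}(ℓ) to it, and (m₁, m₂) is a morphism of (Q,T)-biautomata from it to the final biautomaton Final_{Q,T}(ℓ). Moreover this biautomaton is minimal: for every coherent (Q,T)-biautomaton B consistent with ℓ there exist a coherent (Q,T)-biautomaton P consistent with ℓ and morphisms of (Q,T)-biautomata from P to (N₁, N₂, i^min, δ^min, ē^min, o^min) with both components in E, and from P to B with both components in M. -/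
open CategoryTheory

lemma snoc_inj {A : Type} {q q' : List A} {a a' : A} (h : q ++ [a] = q' ++ [a']) :
    q = q' ∧ a = a' := by
  have := List.append_inj h (by have := congrArg List.length h; simpa using this)
  simpa using this

lemma reassoc_eq {C : Type*} [CategoryTheory.Category C] {X Y Z W : C} {f : X ⟶ Y} {g : Y ⟶ Z}
    {h : X ⟶ Z} (hw : f ≫ g = h) (k : Z ⟶ W) : f ≫ g ≫ k = h ≫ k := by
  rw [← Category.assoc, hw]

lemma FactSys.cancelE {C : Type*} [CategoryTheory.Category C] {E M : MorphismProperty C}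
    (fs : FactSys E M) {X Y Z : C} {f : X ⟶ Y} {g : Y ⟶ Z}
    (hfg : E (f ≫ g)) (hf : E f) : E g := by
  obtain ⟨W, e, m, he, hm, hem⟩ := fs.fact g
  obtain ⟨d, ⟨hd1, hd2⟩, -⟩ := fs.diag (f ≫ g) m (f ≫ e) (𝟙 Z) hfg hm
    (by rw [Category.comp_id, Category.assoc, hem])
  have hmd : m ≫ d = 𝟙 W := by
    obtain ⟨d', -, hu⟩ := fs.diag (f ≫ e) m (f ≫ e) m (fs.E_comp _ _ hf he) hm rfl
    have h1 : (f ≫ e) ≫ m ≫ d = f ≫ e ∧ (m ≫ d) ≫ m = m := by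
      constructor
      · rw [← Category.assoc, Category.assoc f e m, hem, hd1]
      · rw [Category.assoc, hd2, Category.comp_id]
    have h2 : (f ≫ e) ≫ 𝟙 W = f ≫ e ∧ 𝟙 W ≫ m = m := ⟨Category.comp_id _, Category.id_comp _⟩
    exact (hu _ h1).trans (hu _ h2).symm
  have : IsIso m := ⟨d, hmd, hd2⟩
  rw [← hem]
  exact fs.E_comp _ _ he (fs.E_iso m this)

/-- the (E,M)-factorizations of the two canonical morphisms carry a unique
structure of a coherent (Q,T)-biautomaton consistent with ℓ through which `(e₁,e₂)` and
`(m₁,m₂)` become morphisms of biautomata from the initial biautomaton and to the final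
biautomaton respectively; moreover this biautomaton is minimal. -/
theorem stmt11 {A : Type} [Fintype A] {C : Type*} [Category C]
    (E M : MorphismProperty C) (fs : FactSys E M) {X Y : C}
    (ℓ : List A → (X ⟶ Y)) (Q T : Set (List A))
    (hQpre : ∀ u v : List A, u ++ v ∈ Q → u ∈ Q)
    (hTsuf : ∀ u v : List A, u ++ v ∈ T → v ∈ T)
    (hεQ : [] ∈ Q) (hεT : [] ∈ T)
    -- the copower over Q
    (P1 : C) (ι1 : (q : List A) → q ∈ Q → (X ⟶ P1))
    (hP1 : ∀ (Z : C) (f : (q : List A) → q ∈ Q → (X ⟶ Z)),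
      ∃! g : P1 ⟶ Z, ∀ (q : List A) (hq : q ∈ Q), ι1 q hq ≫ g = f q hq)
    -- the copower over Q ∪ QA
    (P2 : C)
    (ι2 : (w : List A) → w ∈ Q ∪ {w | ∃ q ∈ Q, ∃ a : A, w = q ++ [a]} → (X ⟶ P2))
    (hP2 : ∀ (Z : C)
        (f : (w : List A) → w ∈ Q ∪ {w | ∃ q ∈ Q, ∃ a : A, w = q ++ [a]} → (X ⟶ Z)),
      ∃! g : P2 ⟶ Z, ∀ w hw, ι2 w hw ≫ g = f w hw)
    -- the power over T ∪ AT
    (R1 : C)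
    (π1 : (w : List A) → w ∈ T ∪ {w | ∃ a : A, ∃ t ∈ T, w = [a] ++ t} → (R1 ⟶ Y))
    (hR1 : ∀ (Z : C)
        (f : (w : List A) → w ∈ T ∪ {w | ∃ a : A, ∃ t ∈ T, w = [a] ++ t} → (Z ⟶ Y)),
      ∃! g : Z ⟶ R1, ∀ w hw, g ≫ π1 w hw = f w hw)
    -- the power over T
    (R2 : C) (π2 : (t : List A) → t ∈ T → (R2 ⟶ Y))
    (hR2 : ∀ (Z : C) (f : (t : List A) → t ∈ T → (Z ⟶ Y)),
      ∃! g : Z ⟶ R2, ∀ (t : List A) (ht : t ∈ T), g ≫ π2 t ht = f t ht)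
    -- the initial biautomaton
    (ebI : P1 ⟶ P2)
    (hebI : ∀ (q : List A) (hq : q ∈ Q),
      ι1 q hq ≫ ebI = ι2 q (Set.mem_union_left _ hq))
    (δI : A → (P1 ⟶ P2))
    (hδI : ∀ (a : A) (q : List A) (hq : q ∈ Q),
      ι1 q hq ≫ δI a = ι2 (q ++ [a]) (Set.mem_union_right _ ⟨q, hq, a, rfl⟩))
    (oI : (t : List A) → t ∈ T → (P2 ⟶ Y))
    (hoI : ∀ (t : List A) (ht : t ∈ T) (w : List A) hw,
      ι2 w hw ≫ oI t ht = ℓ (w ++ t))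
    -- the final biautomaton
    (iF : (q : List A) → q ∈ Q → (X ⟶ R1))
    (hiF : ∀ (q : List A) (hq : q ∈ Q) (w : List A) hw,
      iF q hq ≫ π1 w hw = ℓ (q ++ w))
    (ebF : R1 ⟶ R2)
    (hebF : ∀ (t : List A) (ht : t ∈ T),
      ebF ≫ π2 t ht = π1 t (Set.mem_union_left _ ht))
    (δF : A → (R1 ⟶ R2))
    (hδF : ∀ (a : A) (t : List A) (ht : t ∈ T),
      δF a ≫ π2 t ht = π1 ([a] ++ t) (Set.mem_union_right _ ⟨a, t, ht, rfl⟩))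
    -- the canonical morphisms and their chosen (E,M)-factorizations
    (c₁ : P1 ⟶ R1)
    (hc₁ : ∀ (q : List A) (hq : q ∈ Q) (w : List A) hw,
      ι1 q hq ≫ c₁ ≫ π1 w hw = ℓ (q ++ w))
    (c₂ : P2 ⟶ R2)
    (hc₂ : ∀ (w : List A) hw (t : List A) (ht : t ∈ T),
      ι2 w hw ≫ c₂ ≫ π2 t ht = ℓ (w ++ t))
    (N1 : C) (e1 : P1 ⟶ N1) (m1 : N1 ⟶ R1)
    (he1 : E e1) (hm1 : M m1) (hem1 : e1 ≫ m1 = c₁)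
    (N2 : C) (e2 : P2 ⟶ N2) (m2 : N2 ⟶ R2)
    (he2 : E e2) (hm2 : M m2) (hem2 : e2 ≫ m2 = c₂) :
    let Init : Biauto A X Y Q T := Biauto.mk P1 P2 ι1 δI ebI oI
    let Final : Biauto A X Y Q T := Biauto.mk R1 R2 iF δF ebF π2
    let Bmin : (A → (N1 ⟶ N2)) → (N1 ⟶ N2) → Biauto A X Y Q T := fun δm ebm =>
      Biauto.mk N1 N2 (fun q hq => ι1 q hq ≫ e1) δm ebm (fun t ht => m2 ≫ π2 t ht)
    let Cond : (A → (N1 ⟶ N2)) → (N1 ⟶ N2) → Prop := fun δm ebm =>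
      (Bmin δm ebm).Coherent ∧ (Bmin δm ebm).Consistent ℓ ∧
      Init.IsHom (Bmin δm ebm) e1 e2 ∧ (Bmin δm ebm).IsHom Final m1 m2
    (∃! p : (A → (N1 ⟶ N2)) × (N1 ⟶ N2), Cond p.1 p.2) ∧
    (∀ (δm : A → (N1 ⟶ N2)) (ebm : N1 ⟶ N2), Cond δm ebm →
      ∀ B : Biauto A X Y Q T, B.Coherent → B.Consistent ℓ →
        ∃ Pb : Biauto A X Y Q T, Pb.Coherent ∧ Pb.Consistent ℓ ∧
          ∃ (f1 : Pb.B1 ⟶ N1) (f2 : Pb.B2 ⟶ N2)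
            (g1 : Pb.B1 ⟶ B.B1) (g2 : Pb.B2 ⟶ B.B2),
            Pb.IsHom (Bmin δm ebm) f1 f2 ∧ E f1 ∧ E f2 ∧
            Pb.IsHom B g1 g2 ∧ M g1 ∧ M g2) := by
  intro Init Final Bmin Cond
  classical
  have ext1 : ∀ {Z : C} (f g : P1 ⟶ Z), (∀ q (hq : q ∈ Q), ι1 q hq ≫ f = ι1 q hq ≫ g) → f = g := by
    intro Z f g h
    obtain ⟨u, -, hu⟩ := hP1 Z fun q hq => ι1 q hq ≫ g
    exact (hu f h).trans (hu g fun _ _ => rfl).symm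
  have ext2 : ∀ {Z : C} (f g : P2 ⟶ Z), (∀ w hw, ι2 w hw ≫ f = ι2 w hw ≫ g) → f = g := by
    intro Z f g h
    obtain ⟨u, -, hu⟩ := hP2 Z fun w hw => ι2 w hw ≫ g
    exact (hu f h).trans (hu g fun _ _ => rfl).symm
  have extR1 : ∀ {Z : C} (f g : Z ⟶ R1), (∀ w hw, f ≫ π1 w hw = g ≫ π1 w hw) → f = g := by
    intro Z f g h
    obtain ⟨u, -, hu⟩ := hR1 Z fun w hw => g ≫ π1 w hw
    exact (hu f h).trans (hu g fun _ _ => rfl).symm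
  have extR2 : ∀ {Z : C} (f g : Z ⟶ R2), (∀ t (ht : t ∈ T), f ≫ π2 t ht = g ≫ π2 t ht) → f = g := by
    intro Z f g h
    obtain ⟨u, -, hu⟩ := hR2 Z fun t ht => g ≫ π2 t ht
    exact (hu f h).trans (hu g fun _ _ => rfl).symm
  have hδI' : ∀ (a : A) (q) (hq : q ∈ Q) {Z : C} (k : P2 ⟶ Z),
      ι1 q hq ≫ δI a ≫ k = ι2 (q ++ [a]) (Set.mem_union_right _ ⟨q, hq, a, rfl⟩) ≫ k :=
    fun a q hq _ k => reassoc_eq (hδI a q hq) k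
  have hebI' : ∀ (q) (hq : q ∈ Q) {Z : C} (k : P2 ⟶ Z),
      ι1 q hq ≫ ebI ≫ k = ι2 q (Set.mem_union_left _ hq) ≫ k :=
    fun q hq _ k => reassoc_eq (hebI q hq) k
  have sqδ : ∀ a : A, c₁ ≫ δF a = δI a ≫ c₂ := by
    intro a
    apply ext1; intro q hq
    apply extR2; intro t ht
    simp only [Category.assoc]
    rw [hδF a t ht, hc₁ q hq, hδI' a q hq, hc₂, List.append_assoc]
  have sqeb : c₁ ≫ ebF = ebI ≫ c₂ := by
    apply ext1; intro q hq
    apply extR2; intro t ht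
    simp only [Category.assoc]
    rw [hebF t ht, hc₁ q hq, hebI' q hq, hc₂]
  have hδu : ∀ a : A, ∃! d : N1 ⟶ N2, e1 ≫ d = δI a ≫ e2 ∧ d ≫ m2 = m1 ≫ δF a := by
    intro a
    apply fs.diag e1 m2 (δI a ≫ e2) (m1 ≫ δF a) he1 hm2
    rw [← Category.assoc, hem1, sqδ a, ← hem2, Category.assoc]
  have hebu : ∃! d : N1 ⟶ N2, e1 ≫ d = ebI ≫ e2 ∧ d ≫ m2 = m1 ≫ ebF := by
    apply fs.diag e1 m2 (ebI ≫ e2) (m1 ≫ ebF) he1 hm2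
    rw [← Category.assoc, hem1, sqeb, ← hem2, Category.assoc]
  choose δm hδm using fun a => (hδu a).exists
  obtain ⟨ebm, ⟨hebA, hebB⟩, hebU⟩ := hebu
  have hem1' : ∀ {Z : C} (k : R1 ⟶ Z), e1 ≫ m1 ≫ k = c₁ ≫ k := fun k => reassoc_eq hem1 k
  have hem2' : ∀ {Z : C} (k : R2 ⟶ Z), e2 ≫ m2 ≫ k = c₂ ≫ k := fun k => reassoc_eq hem2 k
  have hCond : (Bmin δm ebm).Coherent ∧ (Bmin δm ebm).Consistent ℓ ∧
      Init.IsHom (Bmin δm ebm) e1 e2 ∧ (Bmin δm ebm).IsHom Final m1 m2 := by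
    refine ⟨⟨?_, ?_⟩, ⟨?_, ?_⟩, ⟨fun q hq => rfl, fun a => ((hδm a).1).symm, hebA.symm, ?_⟩,
      ⟨?_, fun a => (hδm a).2, hebB, fun t ht => rfl⟩⟩
    · intro q hq a h
      show (ι1 q hq ≫ e1) ≫ δm a = (ι1 (q ++ [a]) h ≫ e1) ≫ ebm
      rw [Category.assoc, (hδm a).1, Category.assoc, hebA, hδI' a q hq, hebI' (q ++ [a]) h]
    · intro t ht a h
      show δm a ≫ m2 ≫ π2 t ht = ebm ≫ m2 ≫ π2 ([a] ++ t) h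
      rw [reassoc_eq (hδm a).2, reassoc_eq hebB, Category.assoc, Category.assoc, hδF a t ht,
        hebF ([a] ++ t) h]
    · intro q hq a t ht
      show (ι1 q hq ≫ e1) ≫ δm a ≫ m2 ≫ π2 t ht = ℓ (q ++ [a] ++ t)
      rw [Category.assoc, reassoc_eq (hδm a).2, Category.assoc, hδF a t ht, hem1', hc₁ q hq,
        ← List.append_assoc]
    · intro q hq t ht
      show (ι1 q hq ≫ e1) ≫ ebm ≫ m2 ≫ π2 t ht = ℓ (q ++ t)
      rw [Category.assoc, reassoc_eq hebB, Category.assoc, hebF t ht, hem1', hc₁ q hq]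
    · intro t ht
      show e2 ≫ m2 ≫ π2 t ht = oI t ht
      apply ext2; intro w hw
      rw [hem2', hc₂ w hw t ht, hoI t ht w hw]
    · intro q hq
      show (ι1 q hq ≫ e1) ≫ m1 = iF q hq
      apply extR1; intro w hw
      simp only [Category.assoc]
      rw [hem1', hc₁ q hq, hiF q hq]
  refine ⟨⟨(δm, ebm), hCond, ?_⟩, ?_⟩
  · rintro ⟨δ', eb'⟩ hC
    have hC' : (Bmin δ' eb').Coherent ∧ (Bmin δ' eb').Consistent ℓ ∧
        Init.IsHom (Bmin δ' eb') e1 e2 ∧ (Bmin δ' eb').IsHom Final m1 m2 := hC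
    obtain ⟨-, -, hIH, hFH⟩ := hC'
    have h1 : δ' = δm :=
      funext fun a => (hδu a).unique ⟨(hIH.2.1 a).symm, hFH.2.1 a⟩ ⟨(hδm a).1, (hδm a).2⟩
    have h2 : eb' = ebm := hebU eb' ⟨hIH.2.2.1.symm, hFH.2.2.1⟩
    rw [h1, h2]
  · intro δ' eb' hC B hBcoh hBcons
    have hC' : (Bmin δ' eb').Coherent ∧ (Bmin δ' eb').Consistent ℓ ∧
        Init.IsHom (Bmin δ' eb') e1 e2 ∧ (Bmin δ' eb').IsHom Final m1 m2 := hC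
    obtain ⟨-, -, hIH, hFH⟩ := hC'
    have hd1 : ∀ a, e1 ≫ δ' a = δI a ≫ e2 := fun a => (hIH.2.1 a).symm
    have hd2 : ∀ a, δ' a ≫ m2 = m1 ≫ δF a := fun a => hFH.2.1 a
    have heb1 : e1 ≫ eb' = ebI ≫ e2 := hIH.2.2.1.symm
    have heb2 : eb' ≫ m2 = m1 ≫ ebF := hFH.2.2.1
    obtain ⟨h1, hh1, -⟩ := hP1 B.B1 fun q hq => B.i q hq
    have hw2e : ∀ w (hw : w ∈ Q ∪ {w | ∃ q ∈ Q, ∃ a : A, w = q ++ [a]}),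
        ∃ g : X ⟶ B.B2, (∀ h : w ∈ Q, g = B.i w h ≫ B.eb) ∧
          (∀ q (hq : q ∈ Q) (a : A), w = q ++ [a] → g = B.i q hq ≫ B.δ a) := by
      intro w hw
      rcases hw with hQ | ⟨q, hq, a, rfl⟩
      · refine ⟨B.i w hQ ≫ B.eb, fun h => rfl, ?_⟩
        rintro q hq a rfl
        exact (hBcoh.1 q hq a hQ).symm
      · refine ⟨B.i q hq ≫ B.δ a, fun h => hBcoh.1 q hq a h, ?_⟩
        intro q' hq' a' heq
        obtain ⟨rfl, rfl⟩ := snoc_inj heq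
        rfl
    choose w2 hw2Q hw2A using hw2e
    obtain ⟨h2, hh2, -⟩ := hP2 B.B2 w2
    have hv1e : ∀ w (hw : w ∈ T ∪ {w | ∃ a : A, ∃ t ∈ T, w = [a] ++ t}),
        ∃ g : B.B1 ⟶ Y, (∀ h : w ∈ T, g = B.eb ≫ B.o w h) ∧
          (∀ (a : A) t (ht : t ∈ T), w = [a] ++ t → g = B.δ a ≫ B.o t ht) := by
      intro w hw
      rcases hw with hT | ⟨a, t, ht, rfl⟩
      · refine ⟨B.eb ≫ B.o w hT, fun h => rfl, ?_⟩
        rintro a t ht rfl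
        exact (hBcoh.2 t ht a hT).symm
      · refine ⟨B.δ a ≫ B.o t ht, fun h => hBcoh.2 t ht a h, ?_⟩
        intro a' t' ht' heq
        rw [List.singleton_append, List.singleton_append] at heq
        injection heq with ha ht2
        subst ha; subst ht2
        rfl
    choose v1 hv1T hv1A using hv1e
    obtain ⟨k1, hk1, -⟩ := hR1 B.B1 v1
    obtain ⟨k2, hk2, -⟩ := hR2 B.B2 fun t ht => B.o t ht
    have key1 : ∀ q (hq : q ∈ Q) w hw, B.i q hq ≫ v1 w hw = ℓ (q ++ w) := by
      intro q hq w hw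
      rcases id hw with hT | ⟨a, t, ht, rfl⟩
      · rw [hv1T w hw hT]
        exact hBcons.2 q hq w hT
      · rw [hv1A _ hw a t ht rfl, ← List.append_assoc]
        exact hBcons.1 q hq a t ht
    have key2 : ∀ w hw t (ht : t ∈ T), w2 w hw ≫ B.o t ht = ℓ (w ++ t) := by
      intro w hw t ht
      rcases id hw with hQ | ⟨q, hq, a, rfl⟩
      · rw [hw2Q w hw hQ, Category.assoc]
        exact hBcons.2 w hQ t ht
      · rw [hw2A _ hw q hq a rfl, Category.assoc]
        exact hBcons.1 q hq a t ht
    have hc1' : h1 ≫ k1 = c₁ := by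
      apply ext1; intro q hq
      apply extR1; intro w hw
      simp only [Category.assoc]
      rw [reassoc_eq (hh1 q hq), hk1 w hw, key1 q hq w hw, hc₁ q hq w hw]
    have hc2' : h2 ≫ k2 = c₂ := by
      apply ext2; intro w hw
      apply extR2; intro t ht
      simp only [Category.assoc]
      rw [reassoc_eq (hh2 w hw), hk2 t ht, key2 w hw t ht, hc₂ w hw t ht]
    have sqδB : ∀ a : A, h1 ≫ B.δ a = δI a ≫ h2 := by
      intro a
      apply ext1; intro q hq
      rw [reassoc_eq (hh1 q hq), hδI' a q hq, hh2 _ _, hw2A _ _ q hq a rfl]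
    have sqebB : h1 ≫ B.eb = ebI ≫ h2 := by
      apply ext1; intro q hq
      rw [reassoc_eq (hh1 q hq), hebI' q hq, hh2 _ _, hw2Q q _ hq]
    have sqδk : ∀ a : A, B.δ a ≫ k2 = k1 ≫ δF a := by
      intro a
      apply extR2; intro t ht
      simp only [Category.assoc]
      rw [hk2 t ht, hδF a t ht, hk1 _ _, hv1A _ _ a t ht rfl]
    have sqebk : B.eb ≫ k2 = k1 ≫ ebF := by
      apply extR2; intro t ht
      simp only [Category.assoc]
      rw [hk2 t ht, hebF t ht, hk1 _ _, hv1T t _ ht]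
    obtain ⟨PB1, e1', m1', he1', hm1', hfac1⟩ := fs.fact h1
    obtain ⟨PB2, e2', m2', he2', hm2', hfac2⟩ := fs.fact h2
    have hδPu : ∀ a : A, ∃! d : PB1 ⟶ PB2, e1' ≫ d = δI a ≫ e2' ∧ d ≫ m2' = m1' ≫ B.δ a := by
      intro a
      apply fs.diag e1' m2' (δI a ≫ e2') (m1' ≫ B.δ a) he1' hm2'
      rw [← Category.assoc, hfac1, sqδB a, ← hfac2, Category.assoc]
    have hebPu : ∃! d : PB1 ⟶ PB2, e1' ≫ d = ebI ≫ e2' ∧ d ≫ m2' = m1' ≫ B.eb := by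
      apply fs.diag e1' m2' (ebI ≫ e2') (m1' ≫ B.eb) he1' hm2'
      rw [← Category.assoc, hfac1, sqebB, ← hfac2, Category.assoc]
    choose δP hδP using fun a => (hδPu a).exists
    obtain ⟨ebP, ⟨hebP1, hebP2⟩, -⟩ := hebPu
    obtain ⟨f1, ⟨hf1a, hf1b⟩, -⟩ := fs.diag e1' m1 e1 (m1' ≫ k1) he1' hm1
      (by rw [← Category.assoc, hfac1, hc1', hem1])
    obtain ⟨f2, ⟨hf2a, hf2b⟩, -⟩ := fs.diag e2' m2 e2 (m2' ≫ k2) he2' hm2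
      (by rw [← Category.assoc, hfac2, hc2', hem2])
    have hEf1 : E f1 := fs.cancelE (show E (e1' ≫ f1) by rw [hf1a]; exact he1) he1'
    have hEf2 : E f2 := fs.cancelE (show E (e2' ≫ f2) by rw [hf2a]; exact he2) he2'
    refine ⟨Biauto.mk PB1 PB2 (fun q hq => ι1 q hq ≫ e1') δP ebP (fun t ht => m2' ≫ B.o t ht),
      ⟨?_, ?_⟩, ⟨?_, ?_⟩, f1, f2, m1', m2',
      ⟨?_, ?_, ?_, ?_⟩, hEf1, hEf2,
      ⟨?_, fun a => (hδP a).2, hebP2, fun t ht => rfl⟩, hm1', hm2'⟩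
    · intro q hq a h
      show (ι1 q hq ≫ e1') ≫ δP a = (ι1 (q ++ [a]) h ≫ e1') ≫ ebP
      rw [Category.assoc, (hδP a).1, Category.assoc, hebP1, hδI' a q hq, hebI' (q ++ [a]) h]
    · intro t ht a h
      show δP a ≫ m2' ≫ B.o t ht = ebP ≫ m2' ≫ B.o ([a] ++ t) h
      rw [reassoc_eq (hδP a).2, reassoc_eq hebP2, Category.assoc, Category.assoc,
        hBcoh.2 t ht a h]
    · intro q hq a t ht
      show (ι1 q hq ≫ e1') ≫ δP a ≫ m2' ≫ B.o t ht = ℓ (q ++ [a] ++ t)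
      rw [Category.assoc, reassoc_eq (hδP a).2, Category.assoc, reassoc_eq hfac1,
        reassoc_eq (hh1 q hq)]
      exact hBcons.1 q hq a t ht
    · intro q hq t ht
      show (ι1 q hq ≫ e1') ≫ ebP ≫ m2' ≫ B.o t ht = ℓ (q ++ t)
      rw [Category.assoc, reassoc_eq hebP2, Category.assoc, reassoc_eq hfac1,
        reassoc_eq (hh1 q hq)]
      exact hBcons.2 q hq t ht
    · intro q hq
      show (ι1 q hq ≫ e1') ≫ f1 = ι1 q hq ≫ e1
      rw [Category.assoc, hf1a]
    · intro a
      show δP a ≫ f2 = f1 ≫ δ' a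
      have sq : e1' ≫ (m1' ≫ k1 ≫ δF a) = (δI a ≫ e2) ≫ m2 := by
        rw [← Category.assoc, hfac1, ← Category.assoc, hc1', sqδ a, ← hem2, Category.assoc]
      obtain ⟨d, -, hdu⟩ := fs.diag e1' m2 (δI a ≫ e2) (m1' ≫ k1 ≫ δF a) he1' hm2 sq
      have hA : e1' ≫ δP a ≫ f2 = δI a ≫ e2 ∧ (δP a ≫ f2) ≫ m2 = m1' ≫ k1 ≫ δF a := by
        constructor
        · rw [reassoc_eq (hδP a).1, Category.assoc, hf2a]
        · rw [Category.assoc, hf2b, reassoc_eq (hδP a).2, Category.assoc, sqδk a]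
      have hB : e1' ≫ f1 ≫ δ' a = δI a ≫ e2 ∧ (f1 ≫ δ' a) ≫ m2 = m1' ≫ k1 ≫ δF a := by
        constructor
        · rw [← Category.assoc, hf1a, hd1 a]
        · rw [Category.assoc, hd2 a, ← Category.assoc, hf1b, Category.assoc]
      exact (hdu _ hA).trans (hdu _ hB).symm
    · show ebP ≫ f2 = f1 ≫ eb'
      have sq : e1' ≫ (m1' ≫ k1 ≫ ebF) = (ebI ≫ e2) ≫ m2 := by
        rw [← Category.assoc, hfac1, ← Category.assoc, hc1', sqeb, ← hem2, Category.assoc]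
      obtain ⟨d, -, hdu⟩ := fs.diag e1' m2 (ebI ≫ e2) (m1' ≫ k1 ≫ ebF) he1' hm2 sq
      have hA : e1' ≫ ebP ≫ f2 = ebI ≫ e2 ∧ (ebP ≫ f2) ≫ m2 = m1' ≫ k1 ≫ ebF := by
        constructor
        · rw [reassoc_eq hebP1, Category.assoc, hf2a]
        · rw [Category.assoc, hf2b, reassoc_eq hebP2, Category.assoc, sqebk]
      have hB : e1' ≫ f1 ≫ eb' = ebI ≫ e2 ∧ (f1 ≫ eb') ≫ m2 = m1' ≫ k1 ≫ ebF := by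
        constructor
        · rw [← Category.assoc, hf1a, heb1]
        · rw [Category.assoc, heb2, ← Category.assoc, hf1b, Category.assoc]
      exact (hdu _ hA).trans (hdu _ hB).symm
    · intro t ht
      show f2 ≫ m2 ≫ π2 t ht = m2' ≫ B.o t ht
      rw [← Category.assoc, hf2b, Category.assoc, hk2 t ht]
    · intro q hq
      show (ι1 q hq ≫ e1') ≫ m1' = B.i q hq
      rw [Category.assoc, hfac1, hh1 q hq]
end

section
/- Let B = (B1, B2, (i_q)_{q∈Q}, (δ_a)_{a∈A}, ē, (o_t)_{t∈T}) be a coherent (Q,T)-biautomaton consistent with ℓ in which ē is an isomorphism. Define the hypothesis automaton H = (B1, i_ε, (ē⁻¹ ∘ δ_a)_{a∈A}, o_ε ∘ ē), where ε is the empty word. Then for all q ∈ Q and t ∈ T the value of H on the word q ++ t equals ℓ(q ++ t), and for all q ∈ Q, a ∈ A, t ∈ T the value of H on the word q ++ [a] ++ t equals ℓ(q ++ [a] ++ t). -/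
open CategoryTheory

theorem Automaton.runFrom_append {A : Type} {C : Type*} [CategoryTheory.Category C] {X Y : C}
    (Au : Automaton A X Y) (u v : List A) :
    Au.runFrom (u ++ v) = Au.runFrom u ≫ Au.runFrom v := by
  induction u with
  | nil => simp [Automaton.runFrom]
  | cons a u ih => simp [Automaton.runFrom, ih]

/-- if `ē` is an isomorphism in a coherent (Q,T)-biautomaton consistent
with `ℓ`, then the associated hypothesis automaton agrees with `ℓ` on all words of the
form `q ++ t` and `q ++ [a] ++ t` with `q ∈ Q`, `a ∈ A`, `t ∈ T`. -/
theorem stmt12 {A : Type} [Fintype A] {C : Type*} [Category C] {X Y : C}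
    (ℓ : List A → (X ⟶ Y)) (Q T : Set (List A))
    (hQpre : ∀ u v : List A, u ++ v ∈ Q → u ∈ Q)
    (hTsuf : ∀ u v : List A, u ++ v ∈ T → v ∈ T)
    (hεQ : [] ∈ Q) (hεT : [] ∈ T)
    (B : Biauto A X Y Q T) (hcoh : B.Coherent) (hcons : B.Consistent ℓ)
    [IsIso B.eb] :
    let H : Automaton A X Y :=
      Automaton.mk B.B1 (B.i [] hεQ) (fun a => B.δ a ≫ inv B.eb) (B.eb ≫ B.o [] hεT)
    (∀ (q : List A) (hq : q ∈ Q) (t : List A) (ht : t ∈ T),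
      H.value (q ++ t) = ℓ (q ++ t)) ∧
    (∀ (q : List A) (hq : q ∈ Q) (a : A) (t : List A) (ht : t ∈ T),
      H.value (q ++ [a] ++ t) = ℓ (q ++ [a] ++ t)) := by
  intro H
  have hrun : ∀ (t : List A) (ht : t ∈ T),
      H.runFrom t ≫ H.out = B.eb ≫ B.o t ht := by
    intro t
    induction t with
    | nil => intro ht; simp [Automaton.runFrom, H]
    | cons a t ih =>
      intro ht
      have ht' : t ∈ T := hTsuf [a] t ht
      simp only [Automaton.runFrom, Category.assoc]
      rw [ih ht']
      show (B.δ a ≫ inv B.eb) ≫ B.eb ≫ B.o t ht' = _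
      rw [Category.assoc, IsIso.inv_hom_id_assoc]
      exact hcoh.2 t ht' a ht
  have hinit : ∀ (q : List A) (hq : q ∈ Q),
      H.init ≫ H.runFrom q = B.i q hq := by
    intro q
    induction q using List.reverseRecOn with
    | nil => intro hq; simp [Automaton.runFrom, H]
    | append_singleton q a ih =>
      intro hq
      have hq' : q ∈ Q := hQpre q [a] hq
      rw [Automaton.runFrom_append]
      simp only [Automaton.runFrom, Category.comp_id, Category.assoc]
      rw [← Category.assoc, ih hq', ← Category.assoc, hcoh.1 q hq' a hq,
        Category.assoc, IsIso.hom_inv_id, Category.comp_id]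
  constructor
  · intro q hq t ht
    rw [Automaton.value, Automaton.runFrom_append]
    simp only [Category.assoc]
    rw [hrun t ht, ← Category.assoc, hinit q hq]
    exact hcons.2 q hq t ht
  · intro q hq a t ht
    rw [Automaton.value, Automaton.runFrom_append, Automaton.runFrom_append]
    simp only [Automaton.runFrom, Category.comp_id, Category.assoc]
    rw [hrun t ht]
    show H.init ≫ H.runFrom q ≫ (B.δ a ≫ inv B.eb) ≫ B.eb ≫ B.o t ht = _
    rw [Category.assoc, IsIso.inv_hom_id_assoc, ← Category.assoc, hinit q hq]
    exact hcons.1 q hq a t ht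
end

section
/- In the setting of the chosen (E,M)-factorizations N_{Q,T} of the canonical morphisms c_{Q,T}, for all Q ⊆ Q' and T ⊆ T' the square of canonical morphisms commutes: u_{Q⊆Q',T} ∘ v_{Q,T⊆T'} = v_{Q',T⊆T'} ∘ u_{Q⊆Q',T'} as morphisms N_{Q,T'} → N_{Q',T}. -/
open CategoryTheory

/-- The setting of the chosen `(E,M)`-factorizations `N Q T` of the canonical morphisms
`c_{Q,T} : ∐_Q X ⟶ ∏_T Y` induced by the language `ℓ`: for every `Q` there is a copower
`P Q` of `X` over `Q` (with injections `ι`), for every `T` a power `R T` of `Y` over `T`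
(with projections `π`), and for all `Q, T` a chosen factorization
`e Q T : P Q ⟶ N Q T` in `E`, `m Q T : N Q T ⟶ R T` in `M` of `c_{Q,T}`. -/
structure Setup (A : Type) {C : Type*} [Category C] (E M : MorphismProperty C)
    (X Y : C) (ℓ : List A → (X ⟶ Y)) where
  P : Set (List A) → C
  ι : ∀ (Q : Set (List A)) (q : List A), q ∈ Q → (X ⟶ P Q)
  hP : ∀ (Q : Set (List A)) (Z : C) (f : ∀ q : List A, q ∈ Q → (X ⟶ Z)),
    ∃! g : P Q ⟶ Z, ∀ (q : List A) (hq : q ∈ Q), ι Q q hq ≫ g = f q hq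
  R : Set (List A) → C
  π : ∀ (T : Set (List A)) (t : List A), t ∈ T → (R T ⟶ Y)
  hR : ∀ (T : Set (List A)) (Z : C) (f : ∀ t : List A, t ∈ T → (Z ⟶ Y)),
    ∃! g : Z ⟶ R T, ∀ (t : List A) (ht : t ∈ T), g ≫ π T t ht = f t ht
  N : Set (List A) → Set (List A) → C
  e : ∀ Q T : Set (List A), P Q ⟶ N Q T
  m : ∀ Q T : Set (List A), N Q T ⟶ R T
  he : ∀ Q T : Set (List A), E (e Q T)
  hm : ∀ Q T : Set (List A), M (m Q T)
  hfact : ∀ (Q T : Set (List A)) (q : List A) (hq : q ∈ Q) (t : List A) (ht : t ∈ T),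
    ι Q q hq ≫ e Q T ≫ m Q T ≫ π T t ht = ℓ (q ++ t)

namespace Setup

variable {A : Type} {C : Type*} [Category C] {E M : MorphismProperty C}
  {X Y : C} {ℓ : List A → (X ⟶ Y)}

/-- `u` is the canonical morphism `u_{Q⊆Q',T} : N Q T ⟶ N Q' T`:
it satisfies `u ∘ e_{Q,T} = e_{Q',T} ∘ (canonical inclusion)` and
`m_{Q',T} ∘ u = m_{Q,T}`. -/
def IsU (S : Setup A E M X Y ℓ) {Q Q' : Set (List A)} (T : Set (List A))
    (h : Q ⊆ Q') (u : S.N Q T ⟶ S.N Q' T) : Prop :=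
  (∀ (q : List A) (hq : q ∈ Q),
    S.ι Q q hq ≫ S.e Q T ≫ u = S.ι Q' q (h hq) ≫ S.e Q' T) ∧
  u ≫ S.m Q' T = S.m Q T

/-- `v` is the canonical morphism `v_{Q,T⊆T'} : N Q T' ⟶ N Q T`:
it satisfies `v ∘ e_{Q,T'} = e_{Q,T}` and
`m_{Q,T} ∘ v = (canonical restriction) ∘ m_{Q,T'}`. -/
def IsV (S : Setup A E M X Y ℓ) {T T' : Set (List A)} (Q : Set (List A))
    (h : T ⊆ T') (v : S.N Q T' ⟶ S.N Q T) : Prop :=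
  (S.e Q T' ≫ v = S.e Q T) ∧
  (∀ (t : List A) (ht : t ∈ T),
    v ≫ S.m Q T ≫ S.π T t ht = S.m Q T' ≫ S.π T' t (h ht))

end Setup

/-- the square of canonical morphisms between the factorizations commutes:
`u_{Q⊆Q',T} ∘ v_{Q,T⊆T'} = v_{Q',T⊆T'} ∘ u_{Q⊆Q',T'}`. -/
theorem stmt14 {A : Type} [Fintype A] {C : Type*} [Category C]
    (E M : MorphismProperty C) (fs : FactSys E M) {X Y : C}
    (ℓ : List A → (X ⟶ Y)) (S : Setup A E M X Y ℓ)
    (Q Q' T T' : Set (List A)) (hQ : Q ⊆ Q') (hT : T ⊆ T')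
    (u : S.N Q T' ⟶ S.N Q' T') (hu : S.IsU T' hQ u)
    (u' : S.N Q T ⟶ S.N Q' T) (hu' : S.IsU T hQ u')
    (v : S.N Q T' ⟶ S.N Q T) (hv : S.IsV Q hT v)
    (v' : S.N Q' T' ⟶ S.N Q' T) (hv' : S.IsV Q' hT v') :
    v ≫ u' = u ≫ v' := by
  obtain ⟨g, -, hg⟩ := S.hP Q (S.N Q' T) (fun q hq => S.ι Q' q (hQ hq) ≫ S.e Q' T)
  have h1 : S.e Q T' ≫ (v ≫ u') = g := by
    apply hg
    intro q hq
    rw [reassoc_of% hv.1]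
    exact hu'.1 q hq
  have h2 : S.e Q T' ≫ (u ≫ v') = g := by
    apply hg
    intro q hq
    rw [reassoc_of% (hu.1 q hq), hv'.1]
  obtain ⟨w, -, hw⟩ := S.hR T (S.N Q T') (fun t ht => S.m Q T' ≫ S.π T' t (hT ht))
  have h3 : (v ≫ u') ≫ S.m Q' T = w := by
    apply hw
    intro t ht
    simp only [Category.assoc]
    rw [reassoc_of% hu'.2]
    exact hv.2 t ht
  have h4 : (u ≫ v') ≫ S.m Q' T = w := by
    apply hw
    intro t ht
    simp only [Category.assoc]
    rw [hv'.2 t ht, ← Category.assoc, hu.2]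
  have hsq : S.e Q T' ≫ w = g ≫ S.m Q' T := by
    rw [← h3, ← h1]; simp only [Category.assoc]
  obtain ⟨d, -, hd⟩ := fs.diag (S.e Q T') (S.m Q' T) g w (S.he Q T') (S.hm Q' T) hsq
  rw [hd (v ≫ u') ⟨h1, h3⟩, hd (u ≫ v') ⟨h2, h4⟩]
end

section
/- Assume C has all copowers of X and all powers of Y indexed by subsets of List A, and suppose the object N_{List A, List A} is (E,M)-noetherian. Then: (i) there is no sequence T_1 ⊆ T_2 ⊆ ⋯ of subsets of List A such that for every n the canonical morphism v_{List A, T_n ⊆ T_{n+1}} : N_{List A, T_{n+1}} → N_{List A, T_n} (which lies in E) fails to be an isomorphism; and (ii) there is no sequence Q_1 ⊆ Q_2 ⊆ ⋯ of subsets of List A such that for every n the canonical morphism u_{Q_n ⊆ Q_{n+1}, List A} : N_{Q_n, List A} → N_{Q_{n+1}, List A} (which lies in M) fails to be an isomorphism. -/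
open CategoryTheory

section Aux

variable {C : Type*} [Category C] {E M : MorphismProperty C}

/-- Right cancellation for `E`: if `f ∈ E` and `f ≫ g ∈ E` then `g ∈ E`. -/
lemma FactSys.cancel_E (fs : FactSys E M) {X Y Z : C} (f : X ⟶ Y) (g : Y ⟶ Z)
    (hf : E f) (hfg : E (f ≫ g)) : E g := by
  obtain ⟨W, e, m, he, hm, hem⟩ := fs.fact g
  obtain ⟨d, ⟨hd1, hd2⟩, -⟩ := fs.diag (f ≫ g) m (f ≫ e) (𝟙 Z) hfg hm
    (by rw [Category.comp_id, Category.assoc, hem])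
  have key : e ≫ m ≫ d = e := by
    obtain ⟨d'', -, huniq⟩ := fs.diag f m (f ≫ e) g hf hm
      (by rw [Category.assoc, hem])
    have h1 := huniq (e ≫ m ≫ d) ⟨by
        simp only [← Category.assoc]
        rw [Category.assoc f e m, hem]
        exact hd1, by
        simp only [Category.assoc, hd2, Category.comp_id, hem]⟩
    have h2 := huniq e ⟨rfl, hem⟩
    rw [h1, h2]
  have hmd : m ≫ d = 𝟙 W := by
    obtain ⟨d', -, huniq⟩ := fs.diag e m e m he hm rfl
    have h1 := huniq (m ≫ d) ⟨key, by rw [Category.assoc, hd2, Category.comp_id]⟩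
    have h2 := huniq (𝟙 W) ⟨Category.comp_id e, Category.id_comp m⟩
    rw [h1, h2]
  have : IsIso m := ⟨⟨d, hmd, hd2⟩⟩
  rw [← hem]
  exact fs.E_comp e m he (fs.E_iso m this)

/-- Left cancellation for `M`: if `g ∈ M` and `f ≫ g ∈ M` then `f ∈ M`. -/
lemma FactSys.cancel_M (fs : FactSys E M) {X Y Z : C} (f : X ⟶ Y) (g : Y ⟶ Z)
    (hg : M g) (hfg : M (f ≫ g)) : M f := by
  obtain ⟨W, e, m, he, hm, hem⟩ := fs.fact f
  obtain ⟨d, ⟨hd1, hd2⟩, -⟩ := fs.diag e (f ≫ g) (𝟙 X) (m ≫ g) he hfg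
    (by rw [Category.id_comp, ← Category.assoc, hem])
  have key : d ≫ f = m := by
    obtain ⟨d'', -, huniq⟩ := fs.diag e g f (m ≫ g) he hg
      (by rw [← Category.assoc, hem])
    have h1 := huniq (d ≫ f) ⟨by rw [← Category.assoc, hd1, Category.id_comp],
      by rw [Category.assoc]; exact hd2⟩
    have h2 := huniq m ⟨hem, rfl⟩
    rw [h1, h2]
  have hde : d ≫ e = 𝟙 W := by
    obtain ⟨d', -, huniq⟩ := fs.diag e (m ≫ g) e (m ≫ g) he (fs.M_comp m g hm hg) rfl
    have h1 := huniq (d ≫ e) ⟨by rw [← Category.assoc, hd1, Category.id_comp],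
      by rw [Category.assoc, ← Category.assoc e m, hem, ← Category.assoc, key]⟩
    have h2 := huniq (𝟙 W) ⟨Category.comp_id e, Category.id_comp _⟩
    rw [h1, h2]
  have : IsIso e := ⟨⟨d, hd1, hde⟩⟩
  rw [← hem]
  exact fs.M_comp e m (fs.M_iso e this) hm

end Aux

namespace Setup

variable {A : Type} {C : Type*} [Category C] {E M : MorphismProperty C}
  {X Y : C} {ℓ : List A → (X ⟶ Y)}

lemma isV_E (S : Setup A E M X Y ℓ) (fs : FactSys E M) {T T' : Set (List A)}
    (Q : Set (List A)) (h : T ⊆ T') {v : S.N Q T' ⟶ S.N Q T}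
    (hv : S.IsV Q h v) : E v :=
  fs.cancel_E _ _ (S.he Q T') (by rw [hv.1]; exact S.he Q T)

lemma isU_M (S : Setup A E M X Y ℓ) (fs : FactSys E M) {Q Q' : Set (List A)}
    (T : Set (List A)) (h : Q ⊆ Q') {u : S.N Q T ⟶ S.N Q' T}
    (hu : S.IsU T h u) : M u :=
  fs.cancel_M _ _ (S.hm Q' T) (by rw [hu.2]; exact S.hm Q T)

lemma isV_unique (S : Setup A E M X Y ℓ) (fs : FactSys E M) {T T' : Set (List A)}
    (Q : Set (List A)) (h : T ⊆ T') {v v' : S.N Q T' ⟶ S.N Q T}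
    (hv : S.IsV Q h v) (hv' : S.IsV Q h v') : v = v' := by
  have hm : v ≫ S.m Q T = v' ≫ S.m Q T := by
    have hu := S.hR T (S.N Q T') (fun t ht => S.m Q T' ≫ S.π T' t (h ht))
    exact (hu.unique (fun t ht => by rw [Category.assoc]; exact hv.2 t ht)
      (fun t ht => by rw [Category.assoc]; exact hv'.2 t ht))
  obtain ⟨d, -, huniq⟩ := fs.diag (S.e Q T') (S.m Q T) (S.e Q T) (v ≫ S.m Q T)
    (S.he Q T') (S.hm Q T) (by rw [← Category.assoc, hv.1])
  have h1 := huniq v ⟨hv.1, rfl⟩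
  have h2 := huniq v' ⟨hv'.1, hm.symm⟩
  rw [h1, h2]

lemma isU_unique (S : Setup A E M X Y ℓ) (fs : FactSys E M) {Q Q' : Set (List A)}
    (T : Set (List A)) (h : Q ⊆ Q') {u u' : S.N Q T ⟶ S.N Q' T}
    (hu : S.IsU T h u) (hu' : S.IsU T h u') : u = u' := by
  have he : S.e Q T ≫ u = S.e Q T ≫ u' := by
    have hex := S.hP Q (S.N Q' T) (fun q hq => S.ι Q' q (h hq) ≫ S.e Q' T)
    exact hex.unique (fun q hq => hu.1 q hq) (fun q hq => hu'.1 q hq)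
  obtain ⟨d, -, huniq⟩ := fs.diag (S.e Q T) (S.m Q' T) (S.e Q T ≫ u) (S.m Q T)
    (S.he Q T) (S.hm Q' T) (by rw [Category.assoc, hu.2])
  have h1 := huniq u ⟨rfl, hu.2⟩
  have h2 := huniq u' ⟨he.symm, hu'.2⟩
  rw [h1, h2]

lemma isV_exists (S : Setup A E M X Y ℓ) (fs : FactSys E M) {T T' : Set (List A)}
    (Q : Set (List A)) (h : T ⊆ T') : ∃ v, S.IsV Q h v := by
  obtain ⟨r, hr, -⟩ := S.hR T (S.R T') (fun t ht => S.π T' t (h ht))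
  have hsq : S.e Q T' ≫ S.m Q T' ≫ r = S.e Q T ≫ S.m Q T := by
    apply (S.hP Q (S.R T) (fun q hq => S.ι Q q hq ≫ S.e Q T ≫ S.m Q T)).unique
    · intro q hq
      apply (S.hR T X (fun t ht => ℓ (q ++ t))).unique
      · intro t ht
        simp only [Category.assoc, hr]
        exact S.hfact Q T' q hq t (h ht)
      · intro t ht
        simp only [Category.assoc]
        exact S.hfact Q T q hq t ht
    · exact fun q hq => rfl
  obtain ⟨d, ⟨hd1, hd2⟩, -⟩ := fs.diag (S.e Q T') (S.m Q T) (S.e Q T)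
    (S.m Q T' ≫ r) (S.he Q T') (S.hm Q T) hsq
  refine ⟨d, hd1, fun t ht => ?_⟩
  rw [← Category.assoc, hd2, Category.assoc, hr]

lemma isU_exists (S : Setup A E M X Y ℓ) (fs : FactSys E M) {Q Q' : Set (List A)}
    (T : Set (List A)) (h : Q ⊆ Q') : ∃ u, S.IsU T h u := by
  obtain ⟨inc, hinc, -⟩ := S.hP Q (S.P Q') (fun q hq => S.ι Q' q (h hq))
  have hsq : S.e Q T ≫ S.m Q T = (inc ≫ S.e Q' T) ≫ S.m Q' T := by
    apply (S.hP Q (S.R T) (fun q hq => S.ι Q q hq ≫ S.e Q T ≫ S.m Q T)).unique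
    · exact fun q hq => rfl
    · intro q hq
      apply (S.hR T X (fun t ht => ℓ (q ++ t))).unique
      · intro t ht
        simp only [Category.assoc, ← Category.assoc (S.ι Q q hq) inc, hinc]
        simpa using S.hfact Q' T q (h hq) t ht
      · intro t ht
        simp only [Category.assoc]
        exact S.hfact Q T q hq t ht
  obtain ⟨d, ⟨hd1, hd2⟩, -⟩ := fs.diag (S.e Q T) (S.m Q' T) (inc ≫ S.e Q' T)
    (S.m Q T) (S.he Q T) (S.hm Q' T) hsq
  refine ⟨d, fun q hq => ?_, hd2⟩
  rw [← Category.assoc, Category.assoc, hd1, ← Category.assoc, hinc]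

lemma isV_comp (S : Setup A E M X Y ℓ) {T1 T2 T3 : Set (List A)} (Q : Set (List A))
    (h12 : T1 ⊆ T2) (h23 : T2 ⊆ T3)
    {v : S.N Q T3 ⟶ S.N Q T2} {v' : S.N Q T2 ⟶ S.N Q T1}
    (hv : S.IsV Q h23 v) (hv' : S.IsV Q h12 v') :
    S.IsV Q (h12.trans h23) (v ≫ v') := by
  refine ⟨by rw [← Category.assoc, hv.1, hv'.1], fun t ht => ?_⟩
  rw [Category.assoc, hv'.2 t ht]
  exact hv.2 t (h12 ht)

lemma isU_comp (S : Setup A E M X Y ℓ) {Q1 Q2 Q3 : Set (List A)} (T : Set (List A))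
    (h12 : Q1 ⊆ Q2) (h23 : Q2 ⊆ Q3)
    {u : S.N Q1 T ⟶ S.N Q2 T} {u' : S.N Q2 T ⟶ S.N Q3 T}
    (hu : S.IsU T h12 u) (hu' : S.IsU T h23 u') :
    S.IsU T (h12.trans h23) (u ≫ u') := by
  refine ⟨fun q hq => ?_, by rw [Category.assoc, hu'.2, hu.2]⟩
  rw [show S.e Q1 T ≫ u ≫ u' = (S.e Q1 T ≫ u) ≫ u' by rw [Category.assoc],
    ← Category.assoc, hu.1 q hq, Category.assoc]
  exact hu'.1 q (h12 hq)

end Setup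

/-- if `N (List A) (List A)` is `(E,M)`-noetherian, there is no increasing
chain of test sets all of whose canonical `E`-morphisms are non-invertible, and no
increasing chain of state-word sets all of whose canonical `M`-morphisms are
non-invertible. -/
theorem stmt16 {A : Type} [Fintype A] {C : Type*} [Category C]
    (E M : MorphismProperty C) (fs : FactSys E M) {X Y : C}
    (ℓ : List A → (X ⟶ Y)) (S : Setup A E M X Y ℓ)
    (hnoeth : Noetherian E M (S.N Set.univ Set.univ)) :
    (¬ ∃ (T : ℕ → Set (List A)) (hT : ∀ n, T n ⊆ T (n + 1)),
      ∀ n, ∃ v : S.N Set.univ (T (n + 1)) ⟶ S.N Set.univ (T n),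
        S.IsV Set.univ (hT n) v ∧ ¬ IsIso v) ∧
    (¬ ∃ (Q : ℕ → Set (List A)) (hQ : ∀ n, Q n ⊆ Q (n + 1)),
      ∀ n, ∃ u : S.N (Q n) Set.univ ⟶ S.N (Q (n + 1)) Set.univ,
        S.IsU Set.univ (hQ n) u ∧ ¬ IsIso u) := by
  constructor
  · rintro ⟨T, hT, hseq⟩
    apply hnoeth.1
    refine ⟨fun n => S.N Set.univ (T n),
      fun n => (S.isV_exists fs Set.univ (Set.subset_univ (T n))).choose,
      fun n => (hseq n).choose, ?_, ?_, ?_, ?_⟩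
    · exact fun n => S.isV_E fs _ _
        (S.isV_exists fs Set.univ (Set.subset_univ (T n))).choose_spec
    · exact fun n => S.isV_E fs _ _ ((hseq n).choose_spec).1
    · intro n
      exact S.isV_unique fs Set.univ (Set.subset_univ (T n))
        (S.isV_comp Set.univ (hT n) (Set.subset_univ (T (n+1)))
          (S.isV_exists fs Set.univ (Set.subset_univ (T (n+1)))).choose_spec
          ((hseq n).choose_spec).1)
        (S.isV_exists fs Set.univ (Set.subset_univ (T n))).choose_spec
    · exact fun n => ((hseq n).choose_spec).2
  · rintro ⟨Q, hQ, hseq⟩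
    apply hnoeth.2
    refine ⟨fun n => S.N (Q n) Set.univ,
      fun n => (S.isU_exists fs Set.univ (Set.subset_univ (Q n))).choose,
      fun n => (hseq n).choose, ?_, ?_, ?_, ?_⟩
    · exact fun n => S.isU_M fs _ _
        (S.isU_exists fs Set.univ (Set.subset_univ (Q n))).choose_spec
    · exact fun n => S.isU_M fs _ _ ((hseq n).choose_spec).1
    · intro n
      exact S.isU_unique fs Set.univ (Set.subset_univ (Q n))
        (S.isU_comp Set.univ (hQ n) (Set.subset_univ (Q (n+1)))
          ((hseq n).choose_spec).1
          (S.isU_exists fs Set.univ (Set.subset_univ (Q (n+1)))).choose_spec)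
        (S.isU_exists fs Set.univ (Set.subset_univ (Q n))).choose_spec
    · exact fun n => ((hseq n).choose_spec).2
end
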